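/- arXiv:2106.08825 — 9 statements merged into one kernel-verified Lean document; each statement's English description precedes it below -/
import Mathlib

section
/- Let $p$ be an odd prime, $d \geq 1$, $e \geq 0$, and set $q = p^e$. In $\mathbb{F}_p[X_1,\dots,X_{d+1}]$, the element $X_{d+1}^{(p+1)q}$ lies in the ideal generated by $X_1^{pq}, X_2^{pq}, \dots, X_d^{pq}$ and $X_1^{p+1} + X_2^{p+1} + \cdots + X_{d+1}^{p+1}$. -/
open MvPolynomial in
theorem stmt_4 (p : ℕ) (hp : p.Prime) (hodd : Odd p) (d : ℕ) (hd : 1 ≤ d)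
    (e : ℕ) (q : ℕ) (hq : q = p ^ e) :
    (X (Fin.last d) : MvPolynomial (Fin (d + 1)) (ZMod p)) ^ ((p + 1) * q)
      ∈ Ideal.span ((Set.range fun i : Fin d =>
            (X i.castSucc : MvPolynomial (Fin (d + 1)) (ZMod p)) ^ (p * q)) ∪
          {∑ i : Fin (d + 1), X i ^ (p + 1)}) := by
  haveI : Fact p.Prime := ⟨hp⟩
  subst hq
  set F : MvPolynomial (Fin (d + 1)) (ZMod p) := ∑ i : Fin (d + 1), X i ^ (p + 1) with hF
  set S : MvPolynomial (Fin (d + 1)) (ZMod p) := ∑ i : Fin d, X i.castSucc ^ (p + 1) with hS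
  have hFS : (X (Fin.last d) : MvPolynomial (Fin (d + 1)) (ZMod p)) ^ (p + 1) = F - S := by
    rw [hF, Fin.sum_univ_castSucc, hS]; ring
  have key : (X (Fin.last d) : MvPolynomial (Fin (d + 1)) (ZMod p)) ^ ((p + 1) * p ^ e)
      = F ^ (p ^ e) - S ^ (p ^ e) := by
    rw [pow_mul, hFS, sub_pow_char_pow]
  rw [key]
  apply Ideal.sub_mem
  · have hFmem : F ∈ Ideal.span ((Set.range fun i : Fin d =>
        (X i.castSucc : MvPolynomial (Fin (d + 1)) (ZMod p)) ^ (p * p ^ e)) ∪ {F}) :=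
      Ideal.subset_span (Set.mem_union_right _ rfl)
    exact Ideal.pow_mem_of_mem _ hFmem _ (pow_pos hp.pos e)
  · rw [hS, sum_pow_char_pow]
    apply Ideal.sum_mem
    intro i _
    have : ((X i.castSucc : MvPolynomial (Fin (d + 1)) (ZMod p)) ^ (p + 1)) ^ (p ^ e)
        = X i.castSucc ^ (p ^ e) * (X i.castSucc ^ (p * p ^ e)) := by
      rw [← pow_mul, ← pow_add]; ring_nf
    rw [this]
    exact Ideal.mul_mem_left _ _ (Ideal.subset_span (Or.inl ⟨i, rfl⟩))
end

section
/- Let $p$ be an odd prime, $d \geq 1$, $e \geq 0$. In $\mathbb{F}_p[X_1,\dots,X_{d+1}]$, the element $X_{d+1}^{2p^{e+1}}$ lies in the ideal generated by $X_1^{p^{e+1}}, \dots, X_d^{p^{e+1}}$ and $X_1^{p+1} + \cdots + X_{d+1}^{p+1}$. -/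
open MvPolynomial in
theorem stmt_5 (p : ℕ) (hp : p.Prime) (hodd : Odd p) (d : ℕ) (hd : 1 ≤ d) (e : ℕ) :
    (X (Fin.last d) : MvPolynomial (Fin (d + 1)) (ZMod p)) ^ (2 * p ^ (e + 1))
      ∈ Ideal.span ((Set.range fun i : Fin d =>
            (X i.castSucc : MvPolynomial (Fin (d + 1)) (ZMod p)) ^ (p ^ (e + 1))) ∪
          {∑ i : Fin (d + 1), X i ^ (p + 1)}) := by
  haveI : Fact p.Prime := ⟨hp⟩
  set R := MvPolynomial (Fin (d + 1)) (ZMod p)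
  set I := Ideal.span ((Set.range fun i : Fin d =>
            (X i.castSucc : R) ^ (p ^ (e + 1))) ∪
          {∑ i : Fin (d + 1), X i ^ (p + 1)}) with hI
  have hFmem : (∑ i : Fin (d + 1), (X i : R) ^ (p + 1)) ∈ I :=
    Ideal.subset_span (Or.inr rfl)
  have hXi : ∀ i : Fin d, (X i.castSucc : R) ^ (p ^ (e + 1)) ∈ I := fun i =>
    Ideal.subset_span (Or.inl ⟨i, rfl⟩)
  have key : (X (Fin.last d) : R) ^ ((p + 1) * p ^ e) ∈ I := by
    have hfrob : (∑ i : Fin (d + 1), (X i : R) ^ (p + 1)) ^ p ^ e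
        = ∑ i : Fin (d + 1), (X i : R) ^ ((p + 1) * p ^ e) := by
      rw [sum_pow_char_pow]
      simp [pow_mul]
    have hsplit : (∑ i : Fin (d + 1), (X i : R) ^ ((p + 1) * p ^ e))
        = (∑ i : Fin d, (X i.castSucc : R) ^ ((p + 1) * p ^ e))
          + (X (Fin.last d) : R) ^ ((p + 1) * p ^ e) :=
      Fin.sum_univ_castSucc _
    have heq : (X (Fin.last d) : R) ^ ((p + 1) * p ^ e)
        = (∑ i : Fin (d + 1), (X i : R) ^ (p + 1)) ^ p ^ e
          - ∑ i : Fin d, (X i.castSucc : R) ^ ((p + 1) * p ^ e) := by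
      rw [hfrob, hsplit]; ring
    rw [heq]
    refine Ideal.sub_mem _ (Ideal.pow_mem_of_mem _ hFmem _ (pow_pos hp.pos _))
      (Ideal.sum_mem _ fun i _ => ?_)
    have hmul : (p + 1) * p ^ e = p ^ (e + 1) + p ^ e := by ring
    rw [hmul, pow_add]
    exact Ideal.mul_mem_right _ _ (hXi i)
  have hexp : 2 * p ^ (e + 1) = (p + 1) * p ^ e + (p - 1) * p ^ e := by
    rw [← add_mul, pow_succ]
    have h2 : p + 1 + (p - 1) = 2 * p := by have := hp.one_lt; omega
    rw [h2]; ring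
  rw [hexp, pow_add]
  exact Ideal.mul_mem_right _ _ key
end

section
/- Let $p$ be an odd prime, $d \geq 1$, $e \geq 0$, and write $q = p^{e+1}$. Let $n \geq 1$ and suppose $1 \leq r \leq p$ where $n = (p+1)m + r$; if $m = 0$ assume $r > 1$. Then in $\mathbb{F}_p[X_1,\dots,X_{d+1}]$, the element $X_{d+1}^{nq}$ lies in $(X_1^q,\dots,X_d^q)^{n-1} + (X_1^{p+1}+\cdots+X_{d+1}^{p+1})$. If instead $(p+1) \mid n$, then $X_{d+1}^{nq}$ lies in $(X_1^q,\dots,X_d^q)^{n} + (X_1^{p+1}+\cdots+X_{d+1}^{p+1})$. -/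
open MvPolynomial in
theorem stmt_6 (p : ℕ) (hp : p.Prime) (hodd : Odd p) (d : ℕ) (hd : 1 ≤ d) (e : ℕ)
    (q : ℕ) (hq : q = p ^ (e + 1))
    (I : Ideal (MvPolynomial (Fin (d + 1)) (ZMod p)))
    (hI : I = Ideal.span (Set.range fun i : Fin d =>
        (X i.castSucc : MvPolynomial (Fin (d + 1)) (ZMod p)) ^ q))
    (f : MvPolynomial (Fin (d + 1)) (ZMod p))
    (hf : f = ∑ i : Fin (d + 1), X i ^ (p + 1)) :
    (∀ n m r : ℕ, 1 ≤ n → n = (p + 1) * m + r → 1 ≤ r → r ≤ p → (m = 0 → 1 < r) →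
        (X (Fin.last d) : MvPolynomial (Fin (d + 1)) (ZMod p)) ^ (n * q)
          ∈ I ^ (n - 1) ⊔ Ideal.span {f}) ∧
    (∀ n : ℕ, 1 ≤ n → (p + 1) ∣ n →
        (X (Fin.last d) : MvPolynomial (Fin (d + 1)) (ZMod p)) ^ (n * q)
          ∈ I ^ n ⊔ Ideal.span {f}) := by
  haveI := Fact.mk hp
  have hp0 : 0 < p := hp.pos
  have hR : CharP (MvPolynomial (Fin (d + 1)) (ZMod p)) p := inferInstance
  set J : Ideal (MvPolynomial (Fin (d + 1)) (ZMod p)) := Ideal.span (Set.range fun i : Fin d =>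
      (X i.castSucc : MvPolynomial (Fin (d + 1)) (ZMod p)) ^ p) with hJ
  set s : MvPolynomial (Fin (d + 1)) (ZMod p) := ∑ i : Fin d, X i.castSucc ^ (p + 1) with hs
  set x : MvPolynomial (Fin (d + 1)) (ZMod p) := X (Fin.last d) with hx
  have hfs : x ^ (p + 1) = f - s := by
    rw [hf, Fin.sum_univ_castSucc, ← hs, ← hx]; ring
  have hsJ : s ∈ J := by
    rw [hs]
    refine Ideal.sum_mem _ fun i _ => ?_
    have h1 : (X i.castSucc : MvPolynomial (Fin (d + 1)) (ZMod p)) ^ (p + 1)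
        = X i.castSucc ^ p * X i.castSucc := by ring
    rw [h1]
    exact Ideal.mul_mem_right _ _ (Ideal.subset_span (Set.mem_range_self i))
  have hspJ : s ^ p ∈ J ^ (p + 1) := by
    have h1 : s ^ p
        = ∑ i : Fin d, ((X i.castSucc : MvPolynomial (Fin (d + 1)) (ZMod p)) ^ (p + 1)) ^ p := by
      have h0 := map_sum (frobenius (MvPolynomial (Fin (d + 1)) (ZMod p)) p)
        (fun i : Fin d => (X i.castSucc : MvPolynomial (Fin (d + 1)) (ZMod p)) ^ (p + 1))
        Finset.univ
      simp only [frobenius_def] at h0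
      rw [hs]
      exact h0
    rw [h1]
    refine Ideal.sum_mem _ fun i _ => ?_
    have h2 : ((X i.castSucc : MvPolynomial (Fin (d + 1)) (ZMod p)) ^ (p + 1)) ^ p
        = ((X i.castSucc : MvPolynomial (Fin (d + 1)) (ZMod p)) ^ p) ^ (p + 1) := by
      rw [← pow_mul, ← pow_mul, mul_comm]
    rw [h2]
    exact Ideal.pow_mem_pow (Ideal.subset_span (Set.mem_range_self i)) _
  -- key: if s^K ∈ J^t then x^((p+1)*K) ∈ J^t ⊔ (f)
  have key : ∀ K t : ℕ, s ^ K ∈ J ^ t → x ^ ((p + 1) * K) ∈ J ^ t ⊔ Ideal.span {f} := by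
    intro K t hK
    have h1 : (f - s) ^ K - (-s) ^ K ∈ Ideal.span {f} := by
      rw [Ideal.mem_span_singleton]
      simpa using sub_dvd_pow_sub_pow (f - s) (-s) K
    have h2 : (-s) ^ K ∈ J ^ t := by
      rw [neg_pow]
      exact Ideal.mul_mem_left _ _ hK
    have h3 : x ^ ((p + 1) * K) = ((f - s) ^ K - (-s) ^ K) + (-s) ^ K := by
      rw [pow_mul, hfs]; ring
    rw [h3]
    exact add_mem (Ideal.mem_sup_right h1) (Ideal.mem_sup_left h2)
  -- lifting by Frobenius
  have hFdef : ∀ a : MvPolynomial (Fin (d + 1)) (ZMod p),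
      iterateFrobenius (MvPolynomial (Fin (d + 1)) (ZMod p)) p e a = a ^ p ^ e :=
    fun a => rfl
  have lift : ∀ (k : ℕ) (g : MvPolynomial (Fin (d + 1)) (ZMod p)), g ∈ J ^ k ⊔ Ideal.span {f} →
      g ^ p ^ e ∈ I ^ k ⊔ Ideal.span {f} := by
    intro k g hg
    have hmap := Ideal.mem_map_of_mem (iterateFrobenius (MvPolynomial (Fin (d + 1)) (ZMod p)) p e) hg
    rw [Ideal.map_sup, Ideal.map_pow] at hmap
    have hJI : Ideal.map (iterateFrobenius (MvPolynomial (Fin (d + 1)) (ZMod p)) p e) J = I := by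
      rw [hJ, Ideal.map_span, hI]
      congr 1
      rw [← Set.range_comp]
      refine congrArg _ (funext fun i => ?_)
      show iterateFrobenius (MvPolynomial (Fin (d + 1)) (ZMod p)) p e
        ((X i.castSucc : MvPolynomial (Fin (d + 1)) (ZMod p)) ^ p) = _
      rw [hFdef, ← pow_mul, hq, pow_succ']
    have hfI : Ideal.map (iterateFrobenius (MvPolynomial (Fin (d + 1)) (ZMod p)) p e) (Ideal.span {f}) ≤ Ideal.span {f} := by
      rw [Ideal.map_span, Set.image_singleton, hFdef]
      exact Ideal.span_singleton_le_span_singleton.2 (dvd_pow_self f (pow_pos hp0 e).ne')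
    rw [hJI] at hmap
    have := sup_le_sup_left hfI (I ^ k) hmap
    rwa [hFdef] at this
  constructor
  · -- part 1
    intro n m r hn hnm hr1 hrp _
    obtain ⟨r', rfl⟩ : ∃ r', r = r' + 1 := ⟨r - 1, by omega⟩
    have hr'p : r' ≤ p := by omega
    have hsK : s ^ (m * p + r') ∈ J ^ (n - 1) := by
      have hn1 : n - 1 = (p + 1) * m + r' := by omega
      have h1 : s ^ (m * p + r') = (s ^ p) ^ m * s ^ r' := by
        rw [pow_add, mul_comm m p, pow_mul]
      have h2 : (s ^ p) ^ m ∈ (J ^ (p + 1)) ^ m := Ideal.pow_mem_pow hspJ m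
      have h3 : s ^ r' ∈ J ^ r' := Ideal.pow_mem_pow hsJ r'
      have h4 := Ideal.mul_mem_mul h2 h3
      rw [← pow_mul, ← pow_add] at h4
      rw [hn1, h1]
      exact h4
    have hkey := key (m * p + r') (n - 1) hsK
    have hx1 : x ^ (n * p) ∈ J ^ (n - 1) ⊔ Ideal.span {f} := by
      have hexp : n * p = (p + 1) * (m * p + r') + (p - r') := by
        subst hnm; zify [hr'p]; ring
      rw [hexp, pow_add]
      exact Ideal.mul_mem_right _ _ hkey
    have := lift (n - 1) (x ^ (n * p)) hx1
    rw [← pow_mul, mul_assoc, ← pow_succ', ← hq] at this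
    exact this
  · -- part 2
    intro n hn hdvd
    obtain ⟨m, rfl⟩ := hdvd
    have hsK : s ^ (m * p) ∈ J ^ ((p + 1) * m) := by
      have h1 : s ^ (m * p) = (s ^ p) ^ m := by rw [mul_comm, pow_mul]
      have h2 : (s ^ p) ^ m ∈ (J ^ (p + 1)) ^ m := Ideal.pow_mem_pow hspJ m
      rw [← pow_mul] at h2
      rw [h1]
      exact h2
    have hkey := key (m * p) ((p + 1) * m) hsK
    have hx1 : x ^ ((p + 1) * m * p) ∈ J ^ ((p + 1) * m) ⊔ Ideal.span {f} := by
      rw [mul_assoc]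
      exact hkey
    have := lift ((p + 1) * m) _ hx1
    rw [← pow_mul, mul_assoc, ← pow_succ', ← hq] at this
    exact this
end

section
/- Let $p$ be an odd prime, $d \geq 1$, $e \geq 0$, $q = p^{e+1}$, and $n \geq 1$. Suppose $b_1, \dots, b_{d+1}$ are nonnegative integers with $b_1 + \cdots + b_{d+1} = n+1$. Then in $\mathbb{F}_p[X_1,\dots,X_{d+1}]$, the monomial $X_1^{b_1 q} X_2^{b_2 q} \cdots X_{d+1}^{b_{d+1} q}$ lies in the ideal $(X_1^q,\dots,X_d^q)^n + (X_1^{p+1} + \cdots + X_{d+1}^{p+1})$. -/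
open MvPolynomial

private lemma mul_mem_sup' {R : Type*} [CommRing R] {A B C : Ideal R} {x y : R}
    (hx : x ∈ A ⊔ C) (hy : y ∈ B) : x * y ∈ A * B ⊔ C := by
  obtain ⟨a, ha, c, hc, rfl⟩ := Submodule.mem_sup.mp hx
  rw [add_mul]
  exact Submodule.add_mem_sup (Ideal.mul_mem_mul ha hy) (C.mul_mem_right _ hc)

private lemma key (p : ℕ) (hp : p.Prime) (hodd : Odd p) (d : ℕ) (k : ℕ) (hk : 1 ≤ k)
    (B : ℕ) :
    (X (Fin.last d) : MvPolynomial (Fin (d + 1)) (ZMod p)) ^ (B * p ^ k) ∈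
      (Ideal.span (Set.range fun i : Fin d =>
          (X i.castSucc : MvPolynomial (Fin (d + 1)) (ZMod p)) ^ (p ^ k))) ^ (B - 1) ⊔
        Ideal.span {∑ i : Fin (d + 1), X i ^ (p + 1)} := by
  haveI : Fact p.Prime := ⟨hp⟩
  set R := MvPolynomial (Fin (d + 1)) (ZMod p)
  set z : R := X (Fin.last d) with hz
  set F : R := ∑ i : Fin (d + 1), X i ^ (p + 1) with hF
  set S : R := ∑ i : Fin d, X i.castSucc ^ (p + 1) with hS
  have hFS : F = S + z ^ (p + 1) := by
    rw [hF, hS, Fin.sum_univ_castSucc]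
  induction k, hk using Nat.le_induction generalizing B with
  | base =>
    set Iq : Ideal R := Ideal.span (Set.range fun i : Fin d => (X i.castSucc : R) ^ p ^ 1)
      with hIq
    have hSmem : S ∈ Iq := by
      rw [hS]
      refine Ideal.sum_mem _ fun i _ => ?_
      have : (X i.castSucc : R) ^ (p + 1) = X i.castSucc ^ p ^ 1 * X i.castSucc := by
        rw [pow_one, ← pow_succ]
      rw [this]
      exact Ideal.mul_mem_right _ _ (Ideal.subset_span ⟨i, rfl⟩)
    have hzS : z ^ (p + 1) - (-S) = F := by rw [hFS]; ring
    induction B using Nat.strong_induction_on with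
    | _ B IH =>
      by_cases hB : B ≤ p + 1
      · rcases Nat.eq_zero_or_pos B with hB0 | hB1
        · subst hB0
          simpa using Submodule.mem_sup_left (Submodule.mem_top (x := (1 : R)))
        obtain ⟨B', rfl⟩ : ∃ B', B = B' + 1 := ⟨B - 1, by omega⟩
        have hle : B' * (p + 1) ≤ (B' + 1) * p ^ 1 := by
          have h1 : B' * (p + 1) = B' * p + B' := by ring
          have h2 : (B' + 1) * p ^ 1 = B' * p + p := by ring
          rw [h1, h2]
          exact Nat.add_le_add_left (by omega) _
        set r : ℕ := (B' + 1) * p ^ 1 - B' * (p + 1) with hr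
        have hrr : (B' + 1) * p ^ 1 = B' * (p + 1) + r := by omega
        have hdvd : F ∣ (z ^ (p + 1)) ^ B' - (-S) ^ B' := by
          rw [← hzS]; exact sub_dvd_pow_sub_pow _ _ _
        obtain ⟨c, hc⟩ := hdvd
        have heq : z ^ ((B' + 1) * p ^ 1) = F * (c * z ^ r) + (-S) ^ B' * z ^ r := by
          rw [hrr, pow_add, pow_mul]
          linear_combination (z : R) ^ r * hc
        rw [heq]
        refine Ideal.add_mem _ (Submodule.mem_sup_right ?_) (Submodule.mem_sup_left ?_)
        · exact Ideal.mul_mem_right _ _ (Ideal.mem_span_singleton_self F)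
        · have : (-S) ^ B' ∈ Iq ^ (B' + 1 - 1) := by
            simpa using Ideal.pow_mem_pow (neg_mem hSmem) B'
          exact Ideal.mul_mem_right _ _ this
      · push_neg at hB
        have hlt : B - (p + 1) < B := by omega
        have IH' := IH (B - (p + 1)) hlt
        have hexp : (B - (p + 1)) * p ^ 1 + (p + 1) * p ^ 1 = B * p ^ 1 := by
          rw [Nat.sub_mul]
          exact Nat.sub_add_cancel (Nat.mul_le_mul_right _ (by omega))
        have hdvd : F ∣ (z ^ (p + 1)) ^ p - (-S) ^ p := by
          rw [← hzS]; exact sub_dvd_pow_sub_pow _ _ _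
        obtain ⟨c, hc⟩ := hdvd
        have hSp : (-S) ^ p ∈ Iq ^ (p + 1) := by
          rw [hodd.neg_pow]
          refine neg_mem ?_
          have hsum : S ^ p = ∑ i : Fin d, ((X i.castSucc : R) ^ (p + 1)) ^ p := by
            rw [hS]; exact sum_pow_char p _ _
          rw [hsum]
          refine Ideal.sum_mem _ fun i _ => ?_
          have : ((X i.castSucc : R) ^ (p + 1)) ^ p = (X i.castSucc ^ p ^ 1) ^ (p + 1) := by
            rw [← pow_mul, ← pow_mul, pow_one]; ring_nf
          rw [this]
          exact Ideal.pow_mem_pow (Ideal.subset_span (Set.mem_range_self i)) _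
        have heq : z ^ (B * p ^ 1) =
            F * (c * z ^ ((B - (p + 1)) * p ^ 1)) +
              z ^ ((B - (p + 1)) * p ^ 1) * (-S) ^ p := by
          rw [← hexp, pow_add]
          have h2 : (z : R) ^ ((p + 1) * p ^ 1) = (z ^ (p + 1)) ^ p := by
            rw [← pow_mul, pow_one]
          rw [h2]
          linear_combination (z : R) ^ ((B - (p + 1)) * p ^ 1) * hc
        rw [heq]
        refine Ideal.add_mem _ (Submodule.mem_sup_right ?_) ?_
        · exact Ideal.mul_mem_right _ _ (Ideal.mem_span_singleton_self F)
        · have h3 := mul_mem_sup' IH' hSp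
          rw [← pow_add] at h3
          have h4 : B - (p + 1) - 1 + (p + 1) = B - 1 := by omega
          rwa [h4] at h3
  | succ k hk IHk =>
    have h := Ideal.mem_map_of_mem (frobenius R p) (IHk B)
    rw [Ideal.map_sup, Ideal.map_pow, Ideal.map_span, Ideal.map_span, Set.image_singleton,
      ← Set.range_comp] at h
    have hset : (Set.range ((frobenius R p) ∘ fun i : Fin d => (X i.castSucc : R) ^ p ^ k)) =
        Set.range fun i : Fin d => (X i.castSucc : R) ^ p ^ (k + 1) := by
      refine congrArg _ (funext fun i => ?_)
      simp only [Function.comp_apply, frobenius_def, ← pow_mul, ← pow_succ]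
    have hzf : frobenius R p (z ^ (B * p ^ k)) = z ^ (B * p ^ (k + 1)) := by
      rw [frobenius_def, ← pow_mul, mul_assoc, ← pow_succ]
    rw [hset, hzf, frobenius_def] at h
    refine SetLike.le_def.mp (sup_le_sup_left ?_ _) h
    exact Ideal.span_singleton_le_span_singleton.mpr (dvd_pow_self F hp.pos.ne')

open MvPolynomial in
theorem stmt_7 (p : ℕ) (hp : p.Prime) (hodd : Odd p) (d : ℕ) (hd : 1 ≤ d) (e : ℕ)
    (q : ℕ) (hq : q = p ^ (e + 1)) (n : ℕ) (hn : 1 ≤ n)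
    (b : Fin (d + 1) → ℕ) (hb : ∑ i, b i = n + 1) :
    (∏ i : Fin (d + 1), (X i : MvPolynomial (Fin (d + 1)) (ZMod p)) ^ (b i * q))
      ∈ (Ideal.span (Set.range fun i : Fin d =>
            (X i.castSucc : MvPolynomial (Fin (d + 1)) (ZMod p)) ^ q)) ^ n ⊔
        Ideal.span {∑ i : Fin (d + 1), X i ^ (p + 1)} := by
  subst hq
  set R := MvPolynomial (Fin (d + 1)) (ZMod p)
  set Iq : Ideal R := Ideal.span (Set.range fun i : Fin d => (X i.castSucc : R) ^ p ^ (e + 1))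
    with hIq
  set F : R := ∑ i : Fin (d + 1), X i ^ (p + 1) with hF
  rw [Fin.prod_univ_castSucc]
  set s : ℕ := ∑ i : Fin d, b i.castSucc with hs
  have hsum : s + b (Fin.last d) = n + 1 := by
    rw [hs, ← Fin.sum_univ_castSucc, hb]
  have h1 : (∏ i : Fin d, (X i.castSucc : R) ^ (b i.castSucc * p ^ (e + 1))) ∈ Iq ^ s := by
    rw [hs, ← Finset.prod_pow_eq_pow_sum]
    refine Ideal.prod_mem_prod fun i _ => ?_
    rw [mul_comm, pow_mul]
    exact Ideal.pow_mem_pow (Ideal.subset_span (Set.mem_range_self i)) _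
  have h2 := key p hp hodd d (e + 1) (by omega) (b (Fin.last d))
  have h3 := mul_mem_sup' h2 h1
  rw [mul_comm ((X (Fin.last d) : R) ^ (b (Fin.last d) * p ^ (e + 1)))] at h3
  rw [← pow_add] at h3
  refine SetLike.le_def.mp (sup_le_sup_right ?_ _) h3
  exact Ideal.pow_le_pow_right (by omega)
end

section
/- In the polynomial ring $\mathbb{F}_3[X,Y,Z,W]$, the element $W^{30}$ does NOT lie in the ideal generated by $X^{27}$, $Y^{27}$, $Z^{27}$, and $X^4 + Y^4 + Z^4 + W^4$. -/
open MvPolynomial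

/-- The coefficient functional values: dual of the monomial x^4 y^12 z^12 w^2 in the
quotient ring F3[x,y,z,w]/(x^27, y^27, z^27, x^4+y^4+z^4+w^4). -/
def lamf (i j k l : ℕ) : ZMod 3 :=
  if i + j + k + l = 30 ∧ i % 4 = 0 ∧ j % 4 = 0 ∧ k % 4 = 0 ∧ i ≤ 4 ∧ j ≤ 12 ∧ k ≤ 12 then
    (-1) ^ ((28 - i - j - k)/4) *
      ((Nat.factorial ((28 - i - j - k)/4) /
        (Nat.factorial ((4-i)/4) * Nat.factorial ((12-j)/4) * Nat.factorial ((12-k)/4)) : ℕ) : ZMod 3)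
  else 0

lemma lamf_zero {i j k l : ℕ}
    (h : ¬ (i + j + k + l = 30 ∧ i % 4 = 0 ∧ j % 4 = 0 ∧ k % 4 = 0 ∧ i ≤ 4 ∧ j ≤ 12 ∧ k ≤ 12)) :
    lamf i j k l = 0 := if_neg h

lemma keyBounded : ∀ i < 5, ∀ j < 13, ∀ k < 13, ∀ l < 27, i + j + k + l = 26 →
    lamf (i+4) j k l + lamf i (j+4) k l + lamf i j (k+4) l + lamf i j k (l+4) = 0 := by
  decide

lemma key_s8 (i j k l : ℕ) :
    lamf (i+4) j k l + lamf i (j+4) k l + lamf i j (k+4) l + lamf i j k (l+4) = 0 := by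
  by_cases hs : i + j + k + l = 26
  · by_cases hb : i < 5 ∧ j < 13 ∧ k < 13
    · exact keyBounded i hb.1 j hb.2.1 k hb.2.2 l (by omega) hs
    · rw [lamf_zero (by omega), lamf_zero (by omega), lamf_zero (by omega),
        lamf_zero (by omega)]
      simp
  · rw [lamf_zero (by omega), lamf_zero (by omega), lamf_zero (by omega),
      lamf_zero (by omega)]
    simp

def lam (d : Fin 4 →₀ ℕ) : ZMod 3 := lamf (d 0) (d 1) (d 2) (d 3)

noncomputable def L (p : MvPolynomial (Fin 4) (ZMod 3)) : ZMod 3 :=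
  Finsupp.sum (AddMonoidAlgebra.coeff p) fun d c => c * lam d

lemma L_add (p q : MvPolynomial (Fin 4) (ZMod 3)) : L (p + q) = L p + L q := by
  unfold L; rw [AddMonoidAlgebra.coeff_add]; exact Finsupp.sum_add_index' (fun d => zero_mul (lam d)) (fun d c1 c2 => add_mul c1 c2 (lam d))

lemma L_monomial (u : Fin 4 →₀ ℕ) (a : ZMod 3) : L (monomial u a) = a * lam u :=
  sum_monomial_eq (b := fun d c => c * lam d) (zero_mul _)

lemma lam_add_single (u : Fin 4 →₀ ℕ) (n : Fin 4) (m : ℕ) :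
    lam (u + Finsupp.single n m) =
      lamf (u 0 + Finsupp.single n m 0) (u 1 + Finsupp.single n m 1)
        (u 2 + Finsupp.single n m 2) (u 3 + Finsupp.single n m 3) := by
  simp [lam, Finsupp.add_apply]

lemma L_mul_X0 (r : MvPolynomial (Fin 4) (ZMod 3)) : L (r * X 0 ^ 27) = 0 := by
  induction r using MvPolynomial.induction_on' with
  | monomial u a =>
    rw [X_pow_eq_monomial, monomial_mul, L_monomial, lam_add_single]
    simp only [Finsupp.single_apply, reduceIte]
    rw [lamf_zero (by omega), mul_zero]
  | add p q hp hq => rw [add_mul, L_add, hp, hq, add_zero]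

lemma L_mul_X1 (r : MvPolynomial (Fin 4) (ZMod 3)) : L (r * X 1 ^ 27) = 0 := by
  induction r using MvPolynomial.induction_on' with
  | monomial u a =>
    rw [X_pow_eq_monomial, monomial_mul, L_monomial, lam_add_single]
    simp only [Finsupp.single_apply, reduceIte]
    rw [lamf_zero (by omega), mul_zero]
  | add p q hp hq => rw [add_mul, L_add, hp, hq, add_zero]

lemma L_mul_X2 (r : MvPolynomial (Fin 4) (ZMod 3)) : L (r * X 2 ^ 27) = 0 := by
  induction r using MvPolynomial.induction_on' with
  | monomial u a =>
    rw [X_pow_eq_monomial, monomial_mul, L_monomial, lam_add_single]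
    simp only [Finsupp.single_apply, reduceIte]
    rw [lamf_zero (by omega), mul_zero]
  | add p q hp hq => rw [add_mul, L_add, hp, hq, add_zero]

lemma L_mul_f (r : MvPolynomial (Fin 4) (ZMod 3)) :
    L (r * (X 0 ^ 4 + X 1 ^ 4 + X 2 ^ 4 + X 3 ^ 4)) = 0 := by
  induction r using MvPolynomial.induction_on' with
  | monomial u a =>
    rw [mul_add, mul_add, mul_add, X_pow_eq_monomial, X_pow_eq_monomial,
      X_pow_eq_monomial, X_pow_eq_monomial, monomial_mul, monomial_mul, monomial_mul,
      monomial_mul, L_add, L_add, L_add, L_monomial, L_monomial, L_monomial, L_monomial,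
      lam_add_single, lam_add_single, lam_add_single, lam_add_single]
    norm_num [Finsupp.single_apply, Fin.ext_iff, show ((3 : Fin 4) : ℕ) = 3 from rfl]
    linear_combination a * key_s8 (u 0) (u 1) (u 2) (u 3)
  | add p q hp hq => rw [add_mul, L_add, hp, hq, add_zero]

open MvPolynomial in
theorem stmt_8 :
    (X 3 : MvPolynomial (Fin 4) (ZMod 3)) ^ 30
      ∉ Ideal.span ({X 0 ^ 27, X 1 ^ 27, X 2 ^ 27,
          X 0 ^ 4 + X 1 ^ 4 + X 2 ^ 4 + X 3 ^ 4} :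
            Set (MvPolynomial (Fin 4) (ZMod 3))) := by
  intro hmem
  have hL : ∀ x ∈ Ideal.span ({X 0 ^ 27, X 1 ^ 27, X 2 ^ 27,
      X 0 ^ 4 + X 1 ^ 4 + X 2 ^ 4 + X 3 ^ 4} :
        Set (MvPolynomial (Fin 4) (ZMod 3))), ∀ r, L (r * x) = 0 := by
    intro x hx
    induction hx using Submodule.span_induction with
    | mem x h =>
      simp only [Set.mem_insert_iff, Set.mem_singleton_iff] at h
      rcases h with h | h | h | h <;> rw [h]
      · exact L_mul_X0
      · exact L_mul_X1
      · exact L_mul_X2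
      · exact L_mul_f
    | zero => intro r; rw [mul_zero]; simp [L]
    | add x y _ _ hx hy => intro r; rw [mul_add, L_add, hx, hy, add_zero]
    | smul a x _ hx => intro r; rw [smul_eq_mul, ← mul_assoc]; exact hx (r * a)
  have h1 := hL _ hmem 1
  rw [one_mul, X_pow_eq_monomial, L_monomial] at h1
  have h2 : lam (Finsupp.single 3 30) = 1 := by
    have : lam (Finsupp.single 3 30) = lamf 0 0 0 30 := by
      simp [lam, Finsupp.single_apply, Fin.ext_iff,
        show ((3 : Fin 4) : ℕ) = 3 from rfl]
    rw [this]
    decide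
  rw [h2] at h1
  norm_num at h1
end

section
/- Let $K$ be a field and $R = K[X_1,\dots,X_{d+1}]/(f)$ where $f$ is homogeneous of degree $r \geq 2$ and monic in $X_{d+1}$, with $I = (x_1,\dots,x_d)$ and $\mathfrak{m} = (x_1,\dots,x_{d+1})$. Fix $t \in \mathbb{N}$ with $r \leq t+1$. Then $I^n + \mathfrak{m}^{n+t} = I^n$ for all $n \geq 1$. -/
set_option synthInstance.maxHeartbeats 1000000
set_option maxHeartbeats 1000000

open MvPolynomial

private lemma degree_add' {σ : Type*} (a b : σ →₀ ℕ) :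
    (a + b).degree = a.degree + b.degree := by
  simp [Finsupp.degree_eq_weight_one, map_add]

private lemma degree_single' {σ : Type*} (i : σ) (n : ℕ) :
    (Finsupp.single i n).degree = n := by
  classical
  rcases eq_or_ne n 0 with h | h
  · simp [h, Finsupp.degree]
  · exact Finsupp.degree_single i n

private lemma mono_mem {σ : Type*} {K : Type*} [Field K] (k : ℕ) :
    ∀ (s : σ →₀ ℕ) (c : K), s.degree = k →
      monomial s c ∈ (Ideal.span (Set.range (X : σ → MvPolynomial σ K))) ^ k := by
  classical
  induction k with
  | zero =>
    intro s c hs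
    rw [Finsupp.degree_eq_zero_iff] at hs
    simp [hs, pow_zero, Ideal.one_eq_top]
  | succ k ih =>
    intro s c hs
    have hsne : s ≠ 0 := by
      intro h; rw [h, map_zero] at hs; omega
    obtain ⟨i, hi⟩ : ∃ i, s i ≠ 0 := by
      by_contra h; push_neg at h; exact hsne (Finsupp.ext fun j => h j)
    set s' := s - Finsupp.single i 1 with hs'
    have hdecomp : Finsupp.single i 1 + s' = s := by
      ext j
      rcases eq_or_ne j i with rfl | hji
      · simp [hs', Finsupp.single_apply]; omega
      · simp [hs', Finsupp.single_apply, hji.symm, Ne.symm hji]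
    have hdeg : s'.degree = k := by
      have := degree_add' (Finsupp.single i 1) s'
      rw [hdecomp, hs, degree_single'] at this
      omega
    have : monomial s c = X i * monomial s' c := by
      rw [X, monomial_mul, one_mul, hdecomp]
    rw [this, pow_succ, mul_comm (X i)]
    exact Ideal.mul_mem_mul (ih s' c hdeg) (Ideal.subset_span ⟨i, rfl⟩)

private lemma mono_mem2 {σ : Type*} {K : Type*} [Field K] (k : ℕ) (s : σ →₀ ℕ) (c : K) (i : σ)
    (hi : s i ≠ 0) (hs : s.degree = k + 1) :
    monomial s c ∈ Ideal.span {(X i : MvPolynomial σ K)} *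
      (Ideal.span (Set.range (X : σ → MvPolynomial σ K))) ^ k := by
  classical
  set s' := s - Finsupp.single i 1 with hs'
  have hdecomp : Finsupp.single i 1 + s' = s := by
    ext j
    rcases eq_or_ne j i with rfl | hji
    · simp [hs', Finsupp.single_apply]; omega
    · simp [hs', Finsupp.single_apply, hji.symm, Ne.symm hji]
  have hdeg : s'.degree = k := by
    have := degree_add' (Finsupp.single i 1) s'
    rw [hdecomp, hs, degree_single'] at this
    omega
  have : monomial s c = X i * monomial s' c := by
    rw [X, monomial_mul, one_mul, hdecomp]
  rw [this]
  exact Ideal.mul_mem_mul (Ideal.subset_span rfl) (mono_mem k s' c hdeg)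

open MvPolynomial in
theorem stmt_13 (K : Type*) [Field K] (d r t : ℕ) (hr : 2 ≤ r) (hrt : r ≤ t + 1)
    (f : MvPolynomial (Fin (d + 1)) K) (hf : f.IsHomogeneous r)
    (hmonic : f.coeff (Finsupp.single (Fin.last d) r) = 1)
    (I m : Ideal (MvPolynomial (Fin (d + 1)) K ⧸ Ideal.span {f}))
    (hI : I = Ideal.span (Set.range fun i : Fin d =>
        Ideal.Quotient.mk (Ideal.span {f}) (X i.castSucc)))
    (hm : m = Ideal.span (Set.range fun i : Fin (d + 1) =>
        Ideal.Quotient.mk (Ideal.span {f}) (X i))) :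
    ∀ n : ℕ, 1 ≤ n → I ^ n ⊔ m ^ (n + t) = I ^ n := by
  classical
  set mk := Ideal.Quotient.mk (Ideal.span {f}) with hmk
  set J : Ideal (MvPolynomial (Fin (d + 1)) K) :=
    Ideal.span (Set.range fun i : Fin d => X i.castSucc) with hJ
  set M : Ideal (MvPolynomial (Fin (d + 1)) K) :=
    Ideal.span (Set.range (X : Fin (d + 1) → MvPolynomial (Fin (d + 1)) K)) with hM
  set g : MvPolynomial (Fin (d + 1)) K :=
    f - monomial (Finsupp.single (Fin.last d) r) 1 with hg
  -- g lies in J * M^(r-1)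
  have hgmem : g ∈ J * M ^ (r - 1) := by
    rw [g.as_sum]
    apply Ideal.sum_mem
    intro s hsup
    have hcs : coeff s g ≠ 0 := mem_support_iff.mp hsup
    have hsne : s ≠ Finsupp.single (Fin.last d) r := by
      intro h
      apply hcs
      rw [hg, coeff_sub, coeff_monomial, h, if_pos rfl, hmonic, sub_self]
    have hcf : coeff s f ≠ 0 := by
      intro h
      apply hcs
      rw [hg, coeff_sub, coeff_monomial, if_neg (Ne.symm hsne), h, sub_zero]
    have hdeg : s.degree = r := by
      by_contra h
      exact hcf (hf.coeff_eq_zero h)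
    obtain ⟨i, hilast, hsi⟩ : ∃ i, i ≠ Fin.last d ∧ s i ≠ 0 := by
      by_contra h
      push_neg at h
      have hs_eq : s = Finsupp.single (Fin.last d) (s (Fin.last d)) := by
        ext j
        rcases eq_or_ne j (Fin.last d) with rfl | hj
        · simp
        · rw [h j hj, Finsupp.single_apply, if_neg (Ne.symm hj)]
      have : s (Fin.last d) = r := by
        rw [hs_eq, degree_single'] at hdeg; exact hdeg
      exact hsne (by rw [hs_eq, this])
    obtain ⟨j, rfl⟩ := (Fin.eq_castSucc_or_eq_last i).resolve_right hilast
    have hdeg' : s.degree = (r - 1) + 1 := by omega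
    exact Ideal.mul_mono ((Ideal.span_singleton_le_iff_mem J).mpr
      (Ideal.subset_span ⟨j, rfl⟩)) le_rfl (mono_mem2 (r - 1) s _ _ hsi hdeg')
  -- images of J and M under mk
  have hmapJ : Ideal.map mk J = I := by
    rw [hJ, Ideal.map_span, hI]
    congr 1
    rw [← Set.range_comp]
    rfl
  have hmapM : Ideal.map mk M = m := by
    rw [hM, Ideal.map_span, hm]
    congr 1
    rw [← Set.range_comp]
    rfl
  set x : MvPolynomial (Fin (d + 1)) K ⧸ Ideal.span {f} := mk (X (Fin.last d)) with hx
  -- the key relation: x^r ∈ I * m^(r-1)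
  have hxr : x ^ r ∈ I * m ^ (r - 1) := by
    have h1 : x ^ r = - mk g := by
      rw [hx, ← map_pow, X_pow_eq_monomial]
      have : (monomial (Finsupp.single (Fin.last d) r)) (1 : K) = f - g := by
        rw [hg]; ring
      have hf0 : mk f = 0 := Ideal.Quotient.eq_zero_iff_mem.mpr (Ideal.subset_span rfl)
      rw [this, map_sub, hf0, zero_sub]
    rw [h1]
    apply neg_mem
    have := Ideal.mem_map_of_mem mk hgmem
    rwa [Ideal.map_mul, Ideal.map_pow, hmapJ, hmapM] at this
  -- m = I ⊔ span {x}
  set S : Ideal (MvPolynomial (Fin (d + 1)) K ⧸ Ideal.span {f}) :=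
    Ideal.span {x} with hS
  have hmsplit : m = I ⊔ S := by
    rw [hm, hI, hS, ← Ideal.span_union]
    congr 1
    ext p
    constructor
    · rintro ⟨i, rfl⟩
      rcases Fin.eq_castSucc_or_eq_last i with ⟨j, rfl⟩ | rfl
      · exact Or.inl ⟨j, rfl⟩
      · exact Or.inr rfl
    · rintro (⟨j, rfl⟩ | h)
      · exact ⟨j.castSucc, rfl⟩
      · exact ⟨Fin.last d, h.symm⟩
  -- m^(k+1) ≤ I * m^k ⊔ S^(k+1)
  have hP : ∀ k : ℕ, m ^ (k + 1) ≤ I * m ^ k ⊔ S ^ (k + 1) := by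
    intro k
    induction k with
    | zero => simp [hmsplit, Ideal.mul_top]
    | succ k ih =>
      calc m ^ (k + 2) = m * m ^ (k + 1) := by ring
        _ ≤ m * (I * m ^ k ⊔ S ^ (k + 1)) := Ideal.mul_mono le_rfl ih
        _ = m * (I * m ^ k) ⊔ m * S ^ (k + 1) := Ideal.mul_sup _ _ _
        _ = I * m ^ (k + 1) ⊔ (I ⊔ S) * S ^ (k + 1) := by rw [← hmsplit]; ring_nf
        _ = I * m ^ (k + 1) ⊔ (I * S ^ (k + 1) ⊔ S ^ (k + 2)) := by
            rw [Ideal.sup_mul]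
            congr 2
            ring
        _ ≤ I * m ^ (k + 1) ⊔ S ^ (k + 2) := by
            apply sup_le le_sup_left
            apply sup_le _ le_sup_right
            apply le_sup_of_le_left
            exact Ideal.mul_mono le_rfl (Ideal.pow_right_mono (hmsplit ▸ le_sup_right) _)
  -- m^r ≤ I * m^(r-1)
  have hmr : m ^ r ≤ I * m ^ (r - 1) := by
    have hr1 : r - 1 + 1 = r := by omega
    rw [← hr1]
    refine le_trans (hP (r - 1)) (sup_le le_rfl ?_)
    rw [hS, Ideal.span_singleton_pow, hr1]
    exact (Ideal.span_singleton_le_iff_mem _).mpr hxr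
  -- step: m^(k+1) ≤ I * m^k when r ≤ k+1
  have hstep : ∀ k : ℕ, r ≤ k + 1 → m ^ (k + 1) ≤ I * m ^ k := by
    intro k hk
    have h1 : k + 1 = r + (k + 1 - r) := by omega
    have h2 : r - 1 + (k + 1 - r) = k := by omega
    calc m ^ (k + 1) = m ^ r * m ^ (k + 1 - r) := (pow_add m r (k + 1 - r)).symm ▸ (congrArg (m ^ ·) h1)
      _ ≤ (I * m ^ (r - 1)) * m ^ (k + 1 - r) := Ideal.mul_mono hmr le_rfl
      _ = I * m ^ k := by rw [mul_assoc]; exact congrArg (I * ·) ((pow_add m (r - 1) (k + 1 - r)).symm.trans (congrArg (m ^ ·) h2))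
  -- main induction
  have hQ : ∀ n : ℕ, m ^ (n + t) ≤ I ^ n := by
    intro n
    induction n with
    | zero => simp [Ideal.one_eq_top]
    | succ n ih =>
      have h1 : n + 1 + t = (n + t) + 1 := by omega
      rw [h1]
      calc m ^ ((n + t) + 1) ≤ I * m ^ (n + t) := hstep (n + t) (by omega)
        _ ≤ I * I ^ n := Ideal.mul_mono le_rfl ih
        _ = I ^ (n + 1) := (pow_succ' I n).symm
  intro n _
  exact sup_eq_left.mpr (hQ n)
end

section
/- Let $K$ be a field and $R = K[X_1,\dots,X_{d+1}]/(f)$ with $f$ homogeneous of degree $r \geq 2$, monic in $X_{d+1}$, $I = (x_1,\dots,x_d)$, $\mathfrak{m} = (x_1,\dots,x_{d+1})$, and fix $t \geq 0$. Then for all $n \geq 1$: $(x_1) \cap (I^n + \mathfrak{m}^{n+t}) = (x_1)\,(I^{n-1} + \mathfrak{m}^{n-1+t})$, where for $n = 1$ the right side is $(x_1) R$. -/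
set_option synthInstance.maxHeartbeats 1000000
set_option maxHeartbeats 1000000

open MvPolynomial

namespace S14
variable {K : Type*} [Field K] {d : ℕ}

/-- weight of a monomial over a variable set -/
def w (A : Finset (Fin (d+1))) (μ : Fin (d+1) →₀ ℕ) : ℕ := ∑ i ∈ A, μ i

lemma w_add (A : Finset (Fin (d+1))) (μ ν : Fin (d+1) →₀ ℕ) :
    w A (μ + ν) = w A μ + w A ν := by
  simp [w, Finset.sum_add_distrib]

lemma w_single {A : Finset (Fin (d+1))} {i : Fin (d+1)} (hi : i ∈ A) (k : ℕ) :
    w A (Finsupp.single i k) = k := by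
  simp only [w, Finsupp.single_apply]
  rw [Finset.sum_ite_eq A i (fun _ => k)]
  simp [hi]

/-- the monomial ideal of support-weight ≥ n -/
def mIdl (K : Type*) [Field K] (d n : ℕ) (A : Finset (Fin (d+1))) :
    Ideal (MvPolynomial (Fin (d+1)) K) where
  carrier := {p | ∀ μ ∈ p.support, n ≤ w A μ}
  add_mem' := by
    intro a b ha hb μ hμ
    rcases Finset.mem_union.mp (Finsupp.support_add hμ) with h | h
    · exact ha μ h
    · exact hb μ h
  zero_mem' := by simp
  smul_mem' := by
    intro c p hp μ hμ
    have := MvPolynomial.support_mul c p (by simpa using hμ)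
    rcases Finset.mem_add.mp this with ⟨a, ha, b, hb, rfl⟩
    rw [w_add]
    exact le_add_self.trans (Nat.add_le_add_left (hp b hb) _)

noncomputable def spanXA (K : Type*) [Field K] (d : ℕ) (A : Finset (Fin (d+1))) :
    Ideal (MvPolynomial (Fin (d+1)) K) :=
  Ideal.span ((fun i => (X i : MvPolynomial (Fin (d+1)) K)) '' A)

lemma monomial_mem_pow {A : Finset (Fin (d+1))} :
    ∀ (n : ℕ) (μ : Fin (d+1) →₀ ℕ) (c : K), n ≤ w A μ →
      monomial μ c ∈ (spanXA K d A) ^ n := by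
  intro n
  induction n with
  | zero => intro μ c _; simp
  | succ n ih =>
    intro μ c hn
    have hpos : 0 < w A μ := lt_of_lt_of_le (Nat.succ_pos n) hn
    have : ∃ i ∈ A, 0 < μ i := by
      by_contra h
      push_neg at h
      have : w A μ = 0 := Finset.sum_eq_zero (fun i hi => Nat.le_zero.mp (h i hi))
      omega
    obtain ⟨i, hiA, hμi⟩ := this
    set ν : Fin (d+1) →₀ ℕ := μ - Finsupp.single i 1 with hν
    have hsum : Finsupp.single i 1 + ν = μ := by
      ext j
      simp only [Finsupp.add_apply, Finsupp.tsub_apply, Finsupp.single_apply, hν]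
      by_cases h : i = j
      · subst h; simp; omega
      · simp [h]
    have hwν : n ≤ w A ν := by
      have : w A (Finsupp.single i 1) + w A ν = w A μ := by rw [← w_add, hsum]
      rw [w_single hiA] at this
      omega
    have heq : monomial μ c = X i * monomial ν c := by
      rw [X, monomial_mul, one_mul, hsum]
    rw [heq, pow_succ']
    exact Ideal.mul_mem_mul
      (Ideal.subset_span ⟨i, by simpa using hiA⟩) (ih ν c hwν)

lemma mIdl_mul_le (m n : ℕ) (A : Finset (Fin (d+1))) :
    mIdl K d m A * mIdl K d n A ≤ mIdl K d (m+n) A := by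
  rw [Ideal.mul_le]
  intro a ha b hb μ hμ
  have := MvPolynomial.support_mul a b hμ
  rcases Finset.mem_add.mp this with ⟨x, hx, y, hy, rfl⟩
  rw [w_add]
  exact Nat.add_le_add (ha x hx) (hb y hy)

lemma pow_le_mIdl (A : Finset (Fin (d+1))) (n : ℕ) {p : MvPolynomial (Fin (d+1)) K}
    (hp : p ∈ (spanXA K d A) ^ n) : ∀ μ ∈ p.support, n ≤ w A μ := by
  have h1 : spanXA K d A ≤ mIdl K d 1 A := by
    rw [spanXA, Ideal.span_le]
    rintro _ ⟨i, hiA, rfl⟩ μ hμ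
    rw [MvPolynomial.support_X] at hμ
    simp only [Finset.mem_singleton] at hμ
    subst hμ
    simp only [w, Finsupp.single_apply]
    rw [Finset.sum_ite_eq A i (fun _ => 1)]
    simp [Finset.mem_coe.mp hiA]
  have key : ∀ k : ℕ, (spanXA K d A) ^ k ≤ mIdl K d k A := by
    intro k
    induction k with
    | zero => intro q _ μ hμ; exact Nat.zero_le _
    | succ k ih =>
      calc (spanXA K d A)^(k+1) = (spanXA K d A)^k * spanXA K d A := pow_succ _ _
      _ ≤ mIdl K d k A * mIdl K d 1 A := Ideal.mul_mono ih h1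
      _ ≤ mIdl K d (k+1) A := mIdl_mul_le k 1 A
  exact key n hp

noncomputable def sig : MvPolynomial (Fin (d+1)) K →ₐ[K] MvPolynomial (Fin (d+1)) K :=
  aeval (fun i => if i = 0 then 0 else X i)

lemma sig_monomial (μ : Fin (d+1) →₀ ℕ) (c : K) :
    sig (monomial μ c) = if μ 0 = 0 then monomial μ c else 0 := by
  rw [sig, aeval_monomial]
  by_cases h : μ 0 = 0
  · rw [if_pos h]
    have : (μ.prod fun i k => (if i = 0 then 0 else X i : MvPolynomial (Fin (d+1)) K) ^ k)
        = μ.prod fun i k => (X i) ^ k := by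
      apply Finsupp.prod_congr
      intro i hi
      have : i ≠ 0 := fun h0 => by
        subst h0; exact (Finsupp.mem_support_iff.mp hi) h
      rw [if_neg this]
    rw [this, monomial_eq, algebraMap_eq]
  · rw [if_neg h]
    have h0 : (0 : Fin (d+1)) ∈ μ.support := Finsupp.mem_support_iff.mpr h
    have : (μ.prod fun i k => (if i = 0 then 0 else X i : MvPolynomial (Fin (d+1)) K) ^ k) = 0 := by
      apply Finset.prod_eq_zero h0
      simp only [if_pos rfl]
      exact zero_pow h
    rw [this, mul_zero]

lemma sig_X (i : Fin (d+1)) :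
    (sig (X i) : MvPolynomial (Fin (d+1)) K) = if i = 0 then 0 else X i :=
  aeval_X _ i

lemma sig_coeff (p : MvPolynomial (Fin (d+1)) K) (ν : Fin (d+1) →₀ ℕ) :
    coeff ν (sig p) = if ν 0 = 0 then coeff ν p else 0 := by
  conv_lhs => rw [p.as_sum, map_sum]
  rw [MvPolynomial.coeff_sum]
  have : ∀ μ ∈ p.support,
      coeff ν (sig (monomial μ (coeff μ p)))
        = if μ = ν then (if μ 0 = 0 then coeff μ p else 0) else 0 := by
    intro μ _
    rw [sig_monomial]
    by_cases h : μ 0 = 0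
    · rw [if_pos h, coeff_monomial]
      by_cases h2 : μ = ν
      · subst h2; simp [h]
      · simp [h2]
    · rw [if_neg h]
      simp only [coeff_zero]
      by_cases h2 : μ = ν
      · subst h2; simp [h]
      · simp [h2]
  rw [Finset.sum_congr rfl this,
    Finset.sum_ite_eq' p.support ν (fun μ => if μ 0 = 0 then coeff μ p else 0)]
  by_cases hs : ν ∈ p.support
  · rw [if_pos hs]
  · rw [if_neg hs, MvPolynomial.notMem_support_iff.mp hs]
    simp

lemma sig_support (p : MvPolynomial (Fin (d+1)) K) : (sig p).support ⊆ p.support := by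
  intro ν hν
  rw [MvPolynomial.mem_support_iff] at hν ⊢
  rw [sig_coeff] at hν
  intro h; rw [h] at hν; simp at hν

lemma sub_sig_mem (p : MvPolynomial (Fin (d+1)) K) :
    p - sig p ∈ Ideal.span {(X 0 : MvPolynomial (Fin (d+1)) K)} := by
  induction p using MvPolynomial.induction_on with
  | C a => simp [sig]
  | add p q hp hq =>
    have : p + q - sig (p + q) = (p - sig p) + (q - sig q) := by
      rw [map_add]; ring
    rw [this]; exact Ideal.add_mem _ hp hq
  | mul_X p i hp =>
    rw [map_mul, sig_X]
    by_cases h : i = 0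
    · subst h
      rw [if_pos rfl, mul_zero, sub_zero]
      exact Ideal.mul_mem_left _ _ (Ideal.subset_span rfl)
    · rw [if_neg h]
      have : p * X i - sig p * X i = (p - sig p) * X i := by ring
      rw [this]
      exact Ideal.mul_mem_right _ _ hp

/-- the big equivalence -/
noncomputable def Ee (K : Type*) [Field K] (d : ℕ) :
    MvPolynomial (Fin (d+1)) K ≃ₐ[K] Polynomial (MvPolynomial (Fin d) K) :=
  (renameEquiv K (Equiv.swap (0 : Fin (d+1)) (Fin.last d))).trans (finSuccEquiv K d)

lemma last_ne_zero (hd : 1 ≤ d) : (Fin.last d : Fin (d+1)) ≠ 0 := by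
  intro h
  have := congrArg Fin.val h
  simp [Fin.last] at this
  omega

/-- polynomial-ring regularity of monic elements modulo extended ideals -/
lemma mreg {A : Type*} [CommRing A] (I' : Ideal A) (a b : Polynomial A)
    (hb : b.Monic) (h : a * b ∈ Ideal.map (Polynomial.C : A →+* Polynomial A) I') :
    a ∈ Ideal.map (Polynomial.C : A →+* Polynomial A) I' := by
  have hk : Ideal.map (Polynomial.C : A →+* Polynomial A) I'
      = RingHom.ker (Polynomial.mapRingHom (Ideal.Quotient.mk I')) := by
    rw [Polynomial.ker_mapRingHom, Ideal.mk_ker]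
  rw [hk] at h ⊢
  rw [RingHom.mem_ker] at h ⊢
  rw [map_mul] at h
  have hbm : (b.map (Ideal.Quotient.mk I')).Monic := hb.map _
  have := hbm.isRegular.right
  have h0 : (Polynomial.mapRingHom (Ideal.Quotient.mk I')) a
      * b.map (Ideal.Quotient.mk I') = 0 * b.map (Ideal.Quotient.mk I') := by
    simpa using h
  exact this h0

lemma swap_ne_zero (hd : 1 ≤ d) {i : Fin (d+1)} (hi : i ≠ Fin.last d) :
    Equiv.swap (0 : Fin (d+1)) (Fin.last d) i ≠ 0 := by
  by_cases h0 : i = 0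
  · subst h0; rw [Equiv.swap_apply_left]; exact last_ne_zero hd
  · rw [Equiv.swap_apply_of_ne_of_ne h0 hi]; exact h0

/-- Image of the ideal J under the equivalence. -/
lemma map_Ee_J (hd : 1 ≤ d) :
    Ideal.map (Ee K d : MvPolynomial (Fin (d+1)) K →+* Polynomial (MvPolynomial (Fin d) K))
      (spanXA K d (Finset.univ.erase (Fin.last d)))
    = Ideal.map (Polynomial.C) (Ideal.span (Set.range (X : Fin d → MvPolynomial (Fin d) K))) := by
  rw [spanXA, Ideal.map_span, Ideal.map_span]
  apply le_antisymm <;> rw [Ideal.span_le]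
  · rintro _ ⟨_, ⟨i, hi, rfl⟩, rfl⟩
    simp only [Finset.coe_erase, Set.mem_diff, Finset.coe_univ, Set.mem_univ, true_and,
      Set.mem_singleton_iff] at hi
    have hne : Equiv.swap (0 : Fin (d+1)) (Fin.last d) i ≠ 0 := swap_ne_zero hd hi
    set j := (Equiv.swap (0 : Fin (d+1)) (Fin.last d) i).pred hne with hjdef
    have hsucc : Equiv.swap (0 : Fin (d+1)) (Fin.last d) i = j.succ :=
      (Fin.succ_pred _ _).symm
    have hEe : (Ee K d) (X i) = Polynomial.C (X j) := by
      rw [Ee]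
      simp only [AlgEquiv.trans_apply, renameEquiv_apply, rename_X]
      rw [hsucc, finSuccEquiv_X_succ]
    refine Ideal.subset_span ⟨X j, ⟨j, rfl⟩, ?_⟩
    exact hEe.symm
  · rintro _ ⟨_, ⟨j, rfl⟩, rfl⟩
    set i := Equiv.swap (0 : Fin (d+1)) (Fin.last d) j.succ with hidef
    have hilast : i ≠ Fin.last d := by
      rw [hidef]
      by_cases h : j.succ = Fin.last d
      · rw [h, Equiv.swap_apply_right]; exact (last_ne_zero hd).symm
      · rw [Equiv.swap_apply_of_ne_of_ne (Fin.succ_ne_zero j) h]; exact h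
    have : (Ee K d) (X i) = Polynomial.C (X j) := by
      rw [Ee]
      simp only [AlgEquiv.trans_apply, renameEquiv_apply, rename_X]
      rw [hidef, Equiv.swap_apply_self, finSuccEquiv_X_succ]
    refine Ideal.subset_span ⟨X i, ⟨i, by simp [hilast], rfl⟩, ?_⟩
    exact this

lemma mapDomain_swap_invol (ν : Fin (d+1) →₀ ℕ) :
    Finsupp.mapDomain (⇑(Equiv.swap (0 : Fin (d+1)) (Fin.last d)))
      (Finsupp.mapDomain (⇑(Equiv.swap (0 : Fin (d+1)) (Fin.last d))) ν) = ν := by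
  rw [← Finsupp.mapDomain_comp]
  have : (⇑(Equiv.swap (0 : Fin (d+1)) (Fin.last d))) ∘
      (⇑(Equiv.swap (0 : Fin (d+1)) (Fin.last d))) = id := by
    funext x; simp [Equiv.swap_apply_self]
  rw [this, Finsupp.mapDomain_id]

lemma Ee_coeff (c : MvPolynomial (Fin (d+1)) K) (k : ℕ) (m : Fin d →₀ ℕ) :
    coeff m (((Ee K d) c).coeff k)
      = coeff (Finsupp.mapDomain (⇑(Equiv.swap (0 : Fin (d+1)) (Fin.last d)))
          (Finsupp.cons k m)) c := by
  rw [Ee]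
  simp only [AlgEquiv.trans_apply, renameEquiv_apply]
  rw [finSuccEquiv_coeff_coeff]
  conv_lhs => rw [← mapDomain_swap_invol (Finsupp.cons k m)]
  rw [coeff_rename_mapDomain _ (Equiv.swap _ _).injective]

lemma w_mapDomain (ν : Fin (d+1) →₀ ℕ) :
    w Finset.univ (Finsupp.mapDomain (⇑(Equiv.swap (0 : Fin (d+1)) (Fin.last d))) ν)
      = w Finset.univ ν := by
  simp only [w]
  have h1 : ∀ i, (Finsupp.mapDomain (⇑(Equiv.swap (0 : Fin (d+1)) (Fin.last d))) ν) i
      = ν ((Equiv.swap (0 : Fin (d+1)) (Fin.last d)).symm i) := fun i =>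
    Finsupp.mapDomain_equiv_apply _ _
  rw [Finset.sum_congr rfl (fun i _ => h1 i)]
  exact Equiv.sum_comp (Equiv.swap (0 : Fin (d+1)) (Fin.last d)).symm ν

lemma w_cons (k : ℕ) (m : Fin d →₀ ℕ) :
    w Finset.univ (Finsupp.cons k m) = k + ∑ j, m j := by
  rw [w, Fin.sum_univ_succ]
  simp [Finsupp.cons_zero, Finsupp.cons_succ]

lemma cons_zero_eq_single (k : ℕ) :
    (Finsupp.cons k (0 : Fin d →₀ ℕ)) = Finsupp.single (0 : Fin (d+1)) k := by
  ext j
  refine Fin.cases ?_ (fun j => ?_) j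
  · simp [Finsupp.cons_zero, Finsupp.single_apply]
  · simp [Finsupp.cons_succ, Finsupp.single_apply, (Fin.succ_ne_zero j).symm]

lemma Ec_monic (hd : 1 ≤ d) (r : ℕ) (c : MvPolynomial (Fin (d+1)) K)
    (hsupp : ∀ μ ∈ c.support, w Finset.univ μ = r)
    (hm : coeff (Finsupp.single (Fin.last d) r) c = 1) :
    ((Ee K d) c).Monic := by
  have hco : ∀ ν, coeff ν c ≠ 0 → w Finset.univ ν = r := fun ν h =>
    hsupp ν (MvPolynomial.mem_support_iff.mpr h)
  apply Polynomial.monic_of_natDegree_le_of_coeff_eq_one r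
  · rw [Polynomial.natDegree_le_iff_coeff_eq_zero]
    intro N hN
    apply MvPolynomial.ext
    intro m
    rw [Ee_coeff, MvPolynomial.coeff_zero]
    by_contra hne
    have := hco _ hne
    rw [w_mapDomain, w_cons] at this
    omega
  · apply MvPolynomial.ext
    intro m
    rw [Ee_coeff]
    by_cases hm0 : m = 0
    · subst hm0
      rw [cons_zero_eq_single, Finsupp.mapDomain_single, Equiv.swap_apply_left, hm]
      simp [MvPolynomial.coeff_one]
    · have : coeff (Finsupp.mapDomain (⇑(Equiv.swap (0 : Fin (d+1)) (Fin.last d)))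
          (Finsupp.cons r m)) c = 0 := by
        by_contra hne
        have h2 := hco _ hne
        rw [w_mapDomain, w_cons] at h2
        have : ∑ j, m j = 0 := by omega
        rw [Finset.sum_eq_zero_iff] at this
        exact hm0 (Finsupp.ext (fun j => this j (Finset.mem_univ j)))
      rw [this]
      simp [MvPolynomial.coeff_one, Ne.symm hm0]

lemma reg_lemma (hd : 1 ≤ d) (r n : ℕ) (c q : MvPolynomial (Fin (d+1)) K)
    (hsupp : ∀ μ ∈ c.support, w Finset.univ μ = r)
    (hm : coeff (Finsupp.single (Fin.last d) r) c = 1)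
    (h : q * c ∈ (spanXA K d (Finset.univ.erase (Fin.last d)))^n) :
    q ∈ (spanXA K d (Finset.univ.erase (Fin.last d)))^n := by
  set J := spanXA K d (Finset.univ.erase (Fin.last d))
  set Eq := (Ee K d).toRingEquiv with hEq
  have hcoe : (Eq : MvPolynomial (Fin (d+1)) K →+* Polynomial (MvPolynomial (Fin d) K))
      = ((Ee K d : MvPolynomial (Fin (d+1)) K →+* Polynomial (MvPolynomial (Fin d) K))) := rfl
  have hmem : ∀ p : MvPolynomial (Fin (d+1)) K,
      p ∈ J^n ↔ Eq p ∈ Ideal.map (Eq : MvPolynomial (Fin (d+1)) K →+* _) (J^n) := by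
    intro p
    rw [Ideal.map_comap_of_equiv, Ideal.mem_comap, RingEquiv.symm_apply_apply]
  have hmapJn : Ideal.map (Eq : MvPolynomial (Fin (d+1)) K →+* _) (J^n)
      = Ideal.map (Polynomial.C)
          ((Ideal.span (Set.range (X : Fin d → MvPolynomial (Fin d) K)))^n) := by
    rw [Ideal.map_pow, Ideal.map_pow, hcoe, map_Ee_J hd]
  rw [hmem, hmapJn] at h ⊢
  have hmul : Eq (q * c) = Eq q * Eq c := map_mul _ _ _
  rw [hmul] at h
  exact mreg _ _ _ (Ec_monic hd r c hsupp hm) h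

lemma mIdl_le_pow (A : Finset (Fin (d+1))) (n : ℕ) {p : MvPolynomial (Fin (d+1)) K}
    (hp : ∀ μ ∈ p.support, n ≤ w A μ) : p ∈ (spanXA K d A) ^ n := by
  rw [p.as_sum]
  exact Ideal.sum_mem _ (fun μ hμ => monomial_mem_pow n μ _ (hp μ hμ))

lemma sup_char_fwd (A₁ A₂ : Finset (Fin (d+1))) (n s : ℕ) {p : MvPolynomial (Fin (d+1)) K}
    (hp : p ∈ (spanXA K d A₁)^n ⊔ (spanXA K d A₂)^s) :
    ∀ μ ∈ p.support, n ≤ w A₁ μ ∨ s ≤ w A₂ μ := by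
  obtain ⟨a, ha, b, hb, rfl⟩ := Submodule.mem_sup.mp hp
  intro μ hμ
  classical
  rcases Finset.mem_union.mp (Finsupp.support_add hμ) with h | h
  · exact Or.inl (pow_le_mIdl A₁ n ha μ h)
  · exact Or.inr (pow_le_mIdl A₂ s hb μ h)

lemma sup_char_bwd (A₁ A₂ : Finset (Fin (d+1))) (n s : ℕ) {p : MvPolynomial (Fin (d+1)) K}
    (hp : ∀ μ ∈ p.support, n ≤ w A₁ μ ∨ s ≤ w A₂ μ) :
    p ∈ (spanXA K d A₁)^n ⊔ (spanXA K d A₂)^s := by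
  classical
  rw [Submodule.mem_sup]
  refine ⟨∑ μ ∈ p.support.filter (fun μ => n ≤ w A₁ μ), monomial μ (coeff μ p), ?_,
    ∑ μ ∈ p.support.filter (fun μ => ¬ n ≤ w A₁ μ), monomial μ (coeff μ p), ?_, ?_⟩
  · exact Ideal.sum_mem _ (fun μ hμ =>
      monomial_mem_pow n μ _ (Finset.mem_filter.mp hμ).2)
  · refine Ideal.sum_mem _ (fun μ hμ => ?_)
    obtain ⟨h1, h2⟩ := Finset.mem_filter.mp hμ
    exact monomial_mem_pow s μ _ ((hp μ h1).resolve_left h2)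
  · rw [Finset.sum_filter_add_sum_filter_not]
    exact p.support_sum_monomial_coeff

lemma support_sum_monomial_subset (T : Finset (Fin (d+1) →₀ ℕ))
    (g : (Fin (d+1) →₀ ℕ) → K) :
    (∑ μ ∈ T, monomial μ (g μ)).support ⊆ T := by
  intro ν hν
  by_contra hcon
  apply MvPolynomial.mem_support_iff.mp hν
  rw [MvPolynomial.coeff_sum]
  apply Finset.sum_eq_zero
  intro μ hμ
  rw [MvPolynomial.coeff_monomial, if_neg]
  rintro rfl; exact hcon hμ

lemma zero_mem_AJ (hd : 1 ≤ d) : (0 : Fin (d+1)) ∈ Finset.univ.erase (Fin.last d) :=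
  Finset.mem_erase.mpr ⟨fun h => last_ne_zero hd h.symm, Finset.mem_univ _⟩

lemma core (hd : 1 ≤ d) {r : ℕ} (hr : 2 ≤ r) (f : MvPolynomial (Fin (d+1)) K)
    (hfsupp : ∀ μ ∈ f.support, w Finset.univ μ = r)
    (hmonic : f.coeff (Finsupp.single (Fin.last d) r) = 1)
    (n t : ℕ) (hn : 1 ≤ n) (G : MvPolynomial (Fin (d+1)) K)
    (h : X 0 * G ∈ (spanXA K d (Finset.univ.erase (Fin.last d)))^n
        ⊔ (spanXA K d Finset.univ)^(n+t) ⊔ Ideal.span {f}) :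
    G ∈ (spanXA K d (Finset.univ.erase (Fin.last d)))^(n-1)
        ⊔ (spanXA K d Finset.univ)^(n-1+t) ⊔ Ideal.span {f} := by
  classical
  set AJ := Finset.univ.erase (Fin.last d) with hAJ
  set J := spanXA K d AJ with hJ
  set M := spanXA K d (Finset.univ : Finset (Fin (d+1))) with hM
  -- decompose
  obtain ⟨u, hu, v, hv, huv⟩ := Submodule.mem_sup.mp h
  obtain ⟨a, ha, b, hb, rfl⟩ := Submodule.mem_sup.mp hu
  obtain ⟨h₁, rfl⟩ := Ideal.mem_span_singleton'.mp hv
  -- facts about c = sig f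
  set c := (sig f : MvPolynomial (Fin (d+1)) K) with hc
  have hsupp_c : ∀ μ ∈ c.support, w Finset.univ μ = r := fun μ hμ =>
    hfsupp μ (sig_support f hμ)
  have hm_c : coeff (Finsupp.single (Fin.last d) r) c = 1 := by
    rw [hc, sig_coeff]
    rw [Finsupp.single_apply, if_neg (last_ne_zero hd), if_pos rfl, hmonic]
  have hfMr : f ∈ M^r := mIdl_le_pow _ _ (fun μ hμ => le_of_eq (hfsupp μ hμ).symm)
  have hcMr : c ∈ M^r := mIdl_le_pow _ _ (fun μ hμ => le_of_eq (hsupp_c μ hμ).symm)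
  -- apply sig
  have hsig0 : (sig (X 0 * G) : MvPolynomial (Fin (d+1)) K) = 0 := by
    rw [map_mul, sig_X, if_pos rfl, zero_mul]
  have heq1 : (0 : MvPolynomial (Fin (d+1)) K) = sig a + sig b + sig h₁ * c := by
    rw [← hsig0, ← huv, map_add, map_add, map_mul]
  have hsiga : (sig a : MvPolynomial (Fin (d+1)) K) ∈ J^n :=
    mIdl_le_pow _ _ (fun μ hμ => pow_le_mIdl _ _ ha μ (sig_support a hμ))
  have hsigb : (sig b : MvPolynomial (Fin (d+1)) K) ∈ M^(n+t) :=
    mIdl_le_pow _ _ (fun μ hμ => pow_le_mIdl _ _ hb μ (sig_support b hμ))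
  have hψc : (sig h₁ : MvPolynomial (Fin (d+1)) K) * c ∈ J^n ⊔ M^(n+t) := by
    have : (sig h₁ : MvPolynomial (Fin (d+1)) K) * c = -(sig a) - sig b := by
      have := heq1; linear_combination -this
    rw [this]
    exact Submodule.sub_mem _ (Submodule.neg_mem _ (Submodule.mem_sup_left hsiga))
      (Submodule.mem_sup_right hsigb)
  -- split ψ = sig h₁
  set ψ := (sig h₁ : MvPolynomial (Fin (d+1)) K) with hψ
  set s0 := n + t - r with hs0
  set ψhi := ∑ μ ∈ ψ.support.filter (fun μ => s0 ≤ w Finset.univ μ),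
      monomial μ (coeff μ ψ) with hψhi
  set ψlo := ∑ μ ∈ ψ.support.filter (fun μ => ¬ s0 ≤ w Finset.univ μ),
      monomial μ (coeff μ ψ) with hψlo
  have hsplit : ψ = ψhi + ψlo := by
    rw [hψhi, hψlo, Finset.sum_filter_add_sum_filter_not]
    exact ψ.as_sum
  have hψhiM : ψhi ∈ M^s0 := Ideal.sum_mem _ (fun μ hμ =>
    monomial_mem_pow s0 μ _ (Finset.mem_filter.mp hμ).2)
  have hMmul : ∀ (x : MvPolynomial (Fin (d+1)) K), x ∈ M^s0 → x * c ∈ M^(n+t) := by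
    intro x hx
    have h1 : x * c ∈ M^s0 * M^r := Ideal.mul_mem_mul hx hcMr
    have h2 : M^s0 * M^r = M^(s0+r) := (pow_add M s0 r).symm
    have h3 : M^(s0+r) ≤ M^(n+t) := Ideal.pow_le_pow_right (by omega)
    exact h3 (h2 ▸ h1)
  -- ψlo * c ∈ J^n
  have hψloc : ψlo * c ∈ J^n := by
    have hmem : ψlo * c ∈ J^n ⊔ M^(n+t) := by
      have : ψlo * c = ψ * c - ψhi * c := by rw [hsplit]; ring
      rw [this]
      exact Submodule.sub_mem _ hψc (Submodule.mem_sup_right (hMmul _ hψhiM))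
    apply mIdl_le_pow
    intro μ hμ
    have hor := sup_char_fwd _ _ _ _ hmem μ hμ
    rcases hor with h | h
    · exact h
    · -- degree contradiction
      exfalso
      have hsup := MvPolynomial.support_mul ψlo c hμ
      obtain ⟨x, hx, y, hy, rfl⟩ := Finset.mem_add.mp hsup
      have hxlo : ¬ s0 ≤ w Finset.univ x := by
        have : x ∈ ψ.support.filter (fun μ => ¬ s0 ≤ w Finset.univ μ) := by
          rw [hψlo] at hx
          exact support_sum_monomial_subset _ _ hx
        exact (Finset.mem_filter.mp this).2
      have hyr : w Finset.univ y = r := hsupp_c y hy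
      rw [w_add] at h
      omega
  have hψloJ : ψlo ∈ J^n := reg_lemma hd r n c ψlo hsupp_c hm_c hψloc
  -- ψ f ∈ J^n ⊔ M^{n+t}
  have hψf : ψ * f ∈ J^n ⊔ M^(n+t) := by
    rw [hsplit, add_mul]
    refine Submodule.add_mem _ (Submodule.mem_sup_right ?_)
      (Submodule.mem_sup_left (Ideal.mul_mem_right _ _ hψloJ))
    have h1 : ψhi * f ∈ M^s0 * M^r := Ideal.mul_mem_mul hψhiM hfMr
    have h2 : M^s0 * M^r = M^(s0+r) := (pow_add M s0 r).symm
    exact Ideal.pow_le_pow_right (by omega) (h2 ▸ h1)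
  -- h₁ = ψ + h₂ * X 0
  obtain ⟨h₂, hh₂⟩ := Ideal.mem_span_singleton'.mp (sub_sig_mem h₁)
  -- X 0 * (G - h₂ * f) ∈ J^n ⊔ M^{n+t}
  have hkey : X 0 * (G - h₂ * f) ∈ J^n ⊔ M^(n+t) := by
    have : X 0 * (G - h₂ * f) = a + b + ψ * f := by
      have hexp : h₁ = ψ + h₂ * X 0 := by rw [hψ]; linear_combination -hh₂
      have := huv
      rw [hexp] at this
      linear_combination -this
    rw [this]
    exact Submodule.add_mem _ (Submodule.add_mem _
      (Submodule.mem_sup_left ha) (Submodule.mem_sup_right hb)) hψf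
  -- colon
  have hcolon : G - h₂ * f ∈ J^(n-1) ⊔ M^(n-1+t) := by
    apply sup_char_bwd
    intro μ hμ
    have hcoeff : coeff (Finsupp.single 0 1 + μ) (X 0 * (G - h₂ * f)) = coeff μ (G - h₂ * f) :=
      MvPolynomial.coeff_X_mul μ 0 (G - h₂ * f)
    have hmem : (Finsupp.single 0 1 + μ) ∈ (X 0 * (G - h₂ * f)).support := by
      rw [MvPolynomial.mem_support_iff, hcoeff]
      exact MvPolynomial.mem_support_iff.mp hμ
    have hor := sup_char_fwd _ _ _ _ hkey _ hmem
    rw [w_add, w_add, w_single (zero_mem_AJ hd), w_single (Finset.mem_univ _)] at hor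
    omega
  -- conclude
  rw [Submodule.mem_sup]
  refine ⟨G - h₂ * f, hcolon, h₂ * f, ?_, by ring⟩
  exact Ideal.mem_span_singleton'.mpr ⟨h₂, rfl⟩

lemma imageAJ :
    ((fun i => (X i : MvPolynomial (Fin (d+1)) K)) '' ↑(Finset.univ.erase (Fin.last d)))
      = Set.range (fun i : Fin d => (X i.castSucc : MvPolynomial (Fin (d+1)) K)) := by
  ext p
  constructor
  · rintro ⟨i, hi, rfl⟩
    simp only [Finset.coe_erase, Set.mem_diff, Set.mem_singleton_iff] at hi
    obtain ⟨j, rfl⟩ := Fin.exists_castSucc_eq.mpr hi.2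
    exact ⟨j, rfl⟩
  · rintro ⟨j, rfl⟩
    exact ⟨j.castSucc, by simp [Fin.ne_of_lt (Fin.castSucc_lt_last j)], rfl⟩

lemma imageUniv :
    ((fun i => (X i : MvPolynomial (Fin (d+1)) K)) '' ↑(Finset.univ : Finset (Fin (d+1))))
      = Set.range (fun i : Fin (d+1) => (X i : MvPolynomial (Fin (d+1)) K)) := by
  simp

end S14

open MvPolynomial in
theorem stmt_14 (K : Type*) [Field K] (d r t : ℕ) (hr : 2 ≤ r)
    (f : MvPolynomial (Fin (d + 1)) K) (hf : f.IsHomogeneous r)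
    (hmonic : f.coeff (Finsupp.single (Fin.last d) r) = 1)
    (hd : 1 ≤ d)
    (I m : Ideal (MvPolynomial (Fin (d + 1)) K ⧸ Ideal.span {f}))
    (hI : I = Ideal.span (Set.range fun i : Fin d =>
        Ideal.Quotient.mk (Ideal.span {f}) (X i.castSucc)))
    (hm : m = Ideal.span (Set.range fun i : Fin (d + 1) =>
        Ideal.Quotient.mk (Ideal.span {f}) (X i))) :
    ∀ n : ℕ, 1 ≤ n →
      Ideal.span {Ideal.Quotient.mk (Ideal.span {f}) (X (0 : Fin (d + 1)))} ⊓
          (I ^ n ⊔ m ^ (n + t))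
        = Ideal.span {Ideal.Quotient.mk (Ideal.span {f}) (X (0 : Fin (d + 1)))} *
            (I ^ (n - 1) ⊔ m ^ (n - 1 + t)) := by
  intro n hn
  classical
  set π := Ideal.Quotient.mk (Ideal.span {f}) with hπ
  set AJ := Finset.univ.erase (Fin.last d) with hAJ
  set J := S14.spanXA K d AJ with hJ
  set M := S14.spanXA K d (Finset.univ : Finset (Fin (d+1))) with hM
  have hIm : I = Ideal.map π J := by
    rw [hI, hJ, S14.spanXA, Ideal.map_span, S14.imageAJ, ← Set.range_comp]
    rfl
  have hmm : m = Ideal.map π M := by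
    rw [hm, hM, S14.spanXA, Ideal.map_span, S14.imageUniv, ← Set.range_comp]
    rfl
  -- f support fact
  have hfsupp : ∀ μ ∈ f.support, S14.w Finset.univ μ = r := by
    intro μ hμ
    by_contra hne
    apply MvPolynomial.mem_support_iff.mp hμ
    apply hf.coeff_eq_zero
    intro hdeg
    apply hne
    rw [← hdeg, Finsupp.degree, S14.w]
    exact (Finset.sum_subset (Finset.subset_univ _)
      (fun i _ hi => Finsupp.notMem_support_iff.mp hi)).symm
  have hx0J : (X (0 : Fin (d+1)) : MvPolynomial (Fin (d+1)) K) ∈ J :=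
    Ideal.subset_span ⟨0, S14.zero_mem_AJ hd, rfl⟩
  have hx0M : (X (0 : Fin (d+1)) : MvPolynomial (Fin (d+1)) K) ∈ M :=
    Ideal.subset_span ⟨0, Finset.mem_univ _, rfl⟩
  have hx0I : π (X (0 : Fin (d+1))) ∈ I := hIm ▸ Ideal.mem_map_of_mem π hx0J
  have hx0m : π (X (0 : Fin (d+1))) ∈ m := hmm ▸ Ideal.mem_map_of_mem π hx0M
  apply le_antisymm
  · -- hard direction
    intro y hy
    obtain ⟨hy1, hy2⟩ := Submodule.mem_inf.mp hy
    obtain ⟨z, hz⟩ := Ideal.mem_span_singleton'.mp hy1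
    obtain ⟨G, rfl⟩ := Ideal.Quotient.mk_surjective z
    have hyG : y = π (X (0 : Fin (d+1)) * G) := by
      rw [← hz, map_mul, mul_comm]
    have hpre : X (0 : Fin (d+1)) * G ∈ J^n ⊔ M^(n+t) ⊔ Ideal.span {f} := by
      have h1 : π (X (0 : Fin (d+1)) * G) ∈ Ideal.map π (J^n ⊔ M^(n+t)) := by
        rw [Ideal.map_sup, Ideal.map_pow, Ideal.map_pow, ← hIm, ← hmm, ← hyG]
        exact hy2
      have h2 := Ideal.mem_comap.mpr h1
      rw [Ideal.comap_map_of_surjective π Ideal.Quotient.mk_surjective] at h2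
      have hker2 : Ideal.comap π ⊥ = Ideal.span {f} := by
        rw [← RingHom.ker_eq_comap_bot, hπ, Ideal.mk_ker]
      rwa [hker2] at h2
    have hG := S14.core hd hr f hfsupp hmonic n t hn G hpre
    have hπG : π G ∈ I^(n-1) ⊔ m^(n-1+t) := by
      have h1 : π G ∈ Ideal.map π (J^(n-1) ⊔ M^(n-1+t) ⊔ Ideal.span {f}) :=
        Ideal.mem_map_of_mem π hG
      rw [Ideal.map_sup, Ideal.map_sup, Ideal.map_pow, Ideal.map_pow, ← hIm, ← hmm] at h1
      have hker : Ideal.map π (Ideal.span {f}) = ⊥ := by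
        rw [Ideal.map_span, Set.image_singleton]
        have : π f = 0 := Ideal.Quotient.eq_zero_iff_mem.mpr (Ideal.subset_span rfl)
        rw [this, Ideal.span_singleton_eq_bot.mpr rfl]
      rwa [hker, sup_bot_eq] at h1
    rw [hyG, map_mul]
    exact Ideal.mul_mem_mul (Ideal.mem_span_singleton_self _) hπG
  · -- easy direction
    apply le_inf Ideal.mul_le_left
    have hn1 : n - 1 + 1 = n := by omega
    have hspanI : Ideal.span {π (X (0 : Fin (d+1)))} ≤ I := by
      rw [Ideal.span_le, Set.singleton_subset_iff]; exact hx0I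
    have hspanm : Ideal.span {π (X (0 : Fin (d+1)))} ≤ m := by
      rw [Ideal.span_le, Set.singleton_subset_iff]; exact hx0m
    rw [Ideal.mul_sup]
    apply sup_le
    · refine le_trans (Ideal.mul_mono_left hspanI) (le_trans ?_ le_sup_left)
      rw [← pow_succ' I (n-1), hn1]
    · refine le_trans (Ideal.mul_mono_left hspanm) (le_trans ?_ le_sup_right)
      rw [← pow_succ' m (n-1+t)]
      have : n - 1 + t + 1 = n + t := by omega
      rw [this]
end

section
/- For all integers $n \geq 1$, the $\mathbb{F}_3$-dimension of the ring $\mathbb{F}_3[X,Y,Z,W]/\big((X,Y,Z)^n + (X,Y,Z,W)^{n+1} + (X^4+Y^4+Z^4+W^4)\big)$ equals $4\binom{n+2}{3} - 3\binom{n+1}{2} + n$. -/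
set_option synthInstance.maxHeartbeats 1000000
set_option maxHeartbeats 2000000

open Finset MvPolynomial

noncomputable section



def cntT (k d : ℕ) : Finset (Fin k → ℕ) :=
  (Fintype.piFinset fun _ => Finset.range (d+1)).filter (fun f => ∑ i, f i ≤ d)

lemma mem_cntT {k d : ℕ} {f : Fin k → ℕ} : f ∈ cntT k d ↔ ∑ i, f i ≤ d := by
  constructor
  · intro h; exact (Finset.mem_filter.1 h).2
  · intro h
    refine Finset.mem_filter.2 ⟨Fintype.mem_piFinset.2 fun i => ?_, h⟩
    rw [Finset.mem_range, Nat.lt_succ_iff]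
    exact le_trans (Finset.single_le_sum (fun j _ => Nat.zero_le (f j)) (Finset.mem_univ i)) h

lemma hockey (k : ℕ) : ∀ d : ℕ, ∑ j ∈ range (d+1), ((d - j) + k).choose k = (d+k+1).choose (k+1) := by
  intro d
  induction d with
  | zero => simp
  | succ d ih =>
    rw [Finset.sum_range_succ']
    have h1 : ∀ i ∈ range (d+1), (d + 1 - (i+1) + k).choose k = (d - i + k).choose k := by
      intro i hi; congr 2; omega
    rw [Finset.sum_congr rfl h1, ih]
    simp only [Nat.sub_zero]
    rw [show d+1+k+1 = (d+k+1)+1 by ring, Nat.choose_succ_succ' (d+k+1) k,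
      show d+1+k = d+k+1 by ring]
    rw [Nat.add_comm]

lemma card_cntT (k : ℕ) : ∀ d : ℕ, (cntT k d).card = (d+k).choose k := by
  induction k with
  | zero =>
    intro d
    rw [Nat.add_zero, Nat.choose_zero_right]
    have : cntT 0 d = {(fun i => i.elim0)} := by
      ext f
      simp [mem_cntT]
      ext i; exact i.elim0
    rw [this, Finset.card_singleton]
  | succ k ih =>
    intro d
    have hfib : ∀ f ∈ cntT (k+1) d, f 0 ∈ range (d+1) := by
      intro f hf
      rw [Finset.mem_range, Nat.lt_succ_iff]
      exact le_trans (Finset.single_le_sum (fun j _ => Nat.zero_le (f j)) (Finset.mem_univ 0)) (mem_cntT.1 hf)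
    rw [Finset.card_eq_sum_card_fiberwise hfib]
    have hcard : ∀ j ∈ range (d+1), ((cntT (k+1) d).filter (fun f => f 0 = j)).card = (cntT k (d-j)).card := by
      intro j hj
      rw [Finset.mem_range, Nat.lt_succ_iff] at hj
      apply Finset.card_nbij' (fun f => Fin.tail f) (fun g => Fin.cons j g)
      · intro f hf
        have h1 := Finset.mem_filter.1 hf
        have h2 := mem_cntT.1 h1.1
        have h0 : f 0 = j := h1.2
        simp only [Finset.mem_coe, mem_cntT]
        have hs : ∑ i, f i = f 0 + ∑ i, Fin.tail f i := by
          rw [Fin.sum_univ_succ]; rfl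
        omega
      · intro g hg
        have h2 := mem_cntT.1 hg
        refine Finset.mem_filter.2 ⟨mem_cntT.2 ?_, by simp⟩
        rw [Fin.sum_univ_succ]
        simp only [Fin.cons_zero]
        have hs : ∑ i : Fin k, Fin.cons (α := fun _ => ℕ) j g i.succ = ∑ i, g i := by
          apply Finset.sum_congr rfl; intro i _; simp
        omega
      · intro f hf
        have h1 := (Finset.mem_filter.1 hf).2
        rw [← h1]
        exact Fin.cons_self_tail f
      · intro g hg
        funext i
        simp [Fin.tail]
    rw [Finset.sum_congr rfl hcard]
    have h3 : ∀ j ∈ range (d+1), (cntT k (d-j)).card = ((d-j)+k).choose k := fun j _ => ih _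
    rw [Finset.sum_congr rfl h3, hockey]
    congr 1

section
variable (n : ℕ)



def B1fun : Finset (Fin 4 → ℕ) := (cntT 4 n).filter (fun f => f 0 + f 1 + f 2 + 1 ≤ n)
def X1fun : Finset (Fin 4 → ℕ) := (cntT 4 n).filter (fun f => ¬ (f 0 + f 1 + f 2 + 1 ≤ n))
def E3fun : Finset (Fin 3 → ℕ) := (cntT 3 n).filter (fun g => ∑ i, g i = n)
def B2fun : Finset (Fin 4 → ℕ) := (cntT 4 n).filter (fun f => ∑ i, f i + 4 ≤ n)

lemma mem_B1fun {f : Fin 4 → ℕ} : f ∈ B1fun n ↔ f 0 + f 1 + f 2 + f 3 ≤ n ∧ f 0 + f 1 + f 2 + 1 ≤ n := by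
  rw [B1fun, Finset.mem_filter, mem_cntT, Fin.sum_univ_four]

lemma mem_B2fun {f : Fin 4 → ℕ} : f ∈ B2fun n ↔ f 0 + f 1 + f 2 + f 3 + 4 ≤ n := by
  rw [B2fun, Finset.mem_filter, mem_cntT, Fin.sum_univ_four]
  omega

lemma cardX1 (hn : 1 ≤ n) : (X1fun n).card + (n+2).choose 3 = (n+3).choose 3 := by
  have hbij : (X1fun n).card = (E3fun n).card := by
    apply Finset.card_nbij' (fun f => ![f 0, f 1, f 2]) (fun g => ![g 0, g 1, g 2, 0])
    · intro f hf
      rw [Finset.mem_coe, X1fun, Finset.mem_filter, mem_cntT, Fin.sum_univ_four] at hf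
      rw [Finset.mem_coe, E3fun, Finset.mem_filter, mem_cntT, Fin.sum_univ_three]
      simp only [Matrix.cons_val_zero, Matrix.cons_val_one, Matrix.head_cons,
        Matrix.cons_val_two, Matrix.tail_cons]
      omega
    · intro g hg
      rw [Finset.mem_coe, E3fun, Finset.mem_filter, mem_cntT, Fin.sum_univ_three] at hg
      rw [Finset.mem_coe, X1fun, Finset.mem_filter, mem_cntT, Fin.sum_univ_four]
      simp only [Matrix.cons_val_zero, Matrix.cons_val_one, Matrix.head_cons,
        Matrix.cons_val_two, Matrix.tail_cons, Matrix.cons_val_three]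
      omega
    · intro f hf
      rw [Finset.mem_coe, X1fun, Finset.mem_filter, mem_cntT, Fin.sum_univ_four] at hf
      funext i
      fin_cases i <;> simp <;> omega
    · intro g hg
      funext i
      fin_cases i <;> simp
  have hsplit : (E3fun n).card + ((n-1)+3).choose 3 = (n+3).choose 3 := by
    have h1 : (E3fun n) ∪ cntT 3 (n-1) = cntT 3 n := by
      ext g
      rw [Finset.mem_union, E3fun, Finset.mem_filter, mem_cntT, mem_cntT]
      omega
    have hdis : Disjoint (E3fun n) (cntT 3 (n-1)) := by
      rw [Finset.disjoint_left]
      intro g hg hg'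
      rw [E3fun, Finset.mem_filter] at hg
      rw [mem_cntT] at hg'
      omega
    have h2' := Finset.card_union_of_disjoint hdis
    rw [h1, card_cntT, card_cntT] at h2'
    omega
  have h3 : ((n-1)+3).choose 3 = (n+2).choose 3 := by congr 1; omega
  omega

lemma cardB1 (hn : 1 ≤ n) : (B1fun n).card + (n+3).choose 3 = (n+4).choose 4 + (n+2).choose 3 := by
  have h1 : (B1fun n) ∪ X1fun n = cntT 4 n := by
    ext f
    rw [Finset.mem_union, B1fun, X1fun, Finset.mem_filter, Finset.mem_filter]
    tauto
  have hdis : Disjoint (B1fun n) (X1fun n) := by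
    rw [Finset.disjoint_left]
    intro f hf hf'
    rw [B1fun, Finset.mem_filter] at hf
    rw [X1fun, Finset.mem_filter] at hf'
    exact hf'.2 hf.2
  have h2' := Finset.card_union_of_disjoint hdis
  rw [h1, card_cntT] at h2'
  have := cardX1 n hn
  omega

lemma cardB2 : (B2fun n).card = n.choose 4 := by
  rcases le_or_gt 4 n with h | h
  · have : B2fun n = cntT 4 (n-4) := by
      ext f
      rw [mem_B2fun, mem_cntT, Fin.sum_univ_four]
      omega
    rw [this, card_cntT]
    congr 1
    omega
  · have : B2fun n = ∅ := by
      ext f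
      rw [mem_B2fun]
      simp
      omega
    rw [this, Finset.card_empty, eq_comm, Nat.choose_eq_zero_of_lt h]
end


lemma choose4' (m : ℕ) : 24 * (m+4).choose 4 = (m+4)*(m+3)*(m+2)*(m+1) := by
  have h := Nat.choose_mul_factorial_mul_factorial (Nat.le_add_left 4 m)
  rw [Nat.add_sub_cancel] at h
  have hfac : (m+4).factorial = ((m+4)*(m+3)*(m+2)*(m+1)) * m.factorial := by
    rw [show m+4 = (m+3)+1 from rfl, Nat.factorial_succ,
        show m+3 = (m+2)+1 from rfl, Nat.factorial_succ,
        show m+2 = (m+1)+1 from rfl, Nat.factorial_succ, Nat.factorial_succ]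
    ring
  rw [hfac, show (Nat.factorial 4) = 24 from rfl] at h
  have h2 : ((m+4).choose 4 * 24) * m.factorial = ((m+4)*(m+3)*(m+2)*(m+1)) * m.factorial := by
    rw [← h]
  have := Nat.eq_of_mul_eq_mul_right (Nat.factorial_pos m) h2
  linarith [this]

lemma choose3' (m : ℕ) : 6 * (m+3).choose 3 = (m+3)*(m+2)*(m+1) := by
  have h := Nat.choose_mul_factorial_mul_factorial (Nat.le_add_left 3 m)
  rw [Nat.add_sub_cancel] at h
  have hfac : (m+3).factorial = ((m+3)*(m+2)*(m+1)) * m.factorial := by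
    rw [show m+3 = (m+2)+1 from rfl, Nat.factorial_succ,
        show m+2 = (m+1)+1 from rfl, Nat.factorial_succ, Nat.factorial_succ]
    ring
  rw [hfac, show (Nat.factorial 3) = 6 from rfl] at h
  have h2 : ((m+3).choose 3 * 6) * m.factorial = ((m+3)*(m+2)*(m+1)) * m.factorial := by
    rw [← h]
  have := Nat.eq_of_mul_eq_mul_right (Nat.factorial_pos m) h2
  linarith [this]

lemma choose2' (m : ℕ) : 2 * (m+2).choose 2 = (m+2)*(m+1) := by
  have h := Nat.choose_mul_factorial_mul_factorial (Nat.le_add_left 2 m)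
  rw [Nat.add_sub_cancel] at h
  have hfac : (m+2).factorial = ((m+2)*(m+1)) * m.factorial := by
    rw [show m+2 = (m+1)+1 from rfl, Nat.factorial_succ, Nat.factorial_succ]
    ring
  rw [hfac, show (Nat.factorial 2) = 2 from rfl] at h
  have h2 : ((m+2).choose 2 * 2) * m.factorial = ((m+2)*(m+1)) * m.factorial := by
    rw [← h]
  have := Nat.eq_of_mul_eq_mul_right (Nat.factorial_pos m) h2
  linarith [this]

lemma hkey' (q m : ℕ)
    (hA : q + (m+4).choose 4 + (m+4+3).choose 3 = (m+4+4).choose 4 + (m+4+2).choose 3) :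
    24*q + 72*((m+4+1).choose 2) = 96*((m+4+2).choose 3) + 24*(m+4) := by
  have ha := choose4' (m+4)
  have hb := choose3' (m+4)
  have hc := choose3' (m+3)
  have he := choose4' m
  have hf := choose2' (m+3)
  rw [show m+4+2 = m+3+3 from by omega] at hA
  rw [show m+4+2 = m+3+3 from by omega, show m+4+1 = m+3+2 from by omega]
  zify at hA ha hb hc he hf ⊢
  linear_combination (24:ℤ)*hA + ha - 4*hb - 12*hc - he + 36*hf

lemma hineq' (m : ℕ) : 72*((m+4+1).choose 2) ≤ 96*((m+4+2).choose 3) := by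
  have hc := choose3' (m+3)
  have hf := choose2' (m+3)
  rw [show m+4+2 = m+3+3 from by omega, show m+4+1 = m+3+2 from by omega]
  nlinarith [hc, hf, Nat.zero_le m]

lemma arith_final (n q : ℕ) (hn : 1 ≤ n)
    (hA : q + n.choose 4 + (n+3).choose 3 = (n+4).choose 4 + (n+2).choose 3) :
    q = 4 * Nat.choose (n + 2) 3 - 3 * Nat.choose (n + 1) 2 + n := by
  rcases le_or_gt 4 n with h4 | h4
  · obtain ⟨k, rfl⟩ : ∃ k, n = k + 4 := ⟨n - 4, by omega⟩
    have hkey := hkey' q k hA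
    have hineq := hineq' k
    omega
  · interval_cases n <;> (norm_num [Nat.choose] at hA ⊢; omega)



abbrev F3 := ZMod 3
abbrev SP := MvPolynomial (Fin 4) F3

def mono (s : Fin 4 →₀ ℕ) : SP := monomial s (1 : F3)

def xyzd (μ : Fin 4 →₀ ℕ) : ℕ := μ 0 + μ 1 + μ 2
def wd (μ : Fin 4 →₀ ℕ) : ℕ := μ 0 + μ 1 + μ 2 + μ 3

lemma xyzd_add (a b : Fin 4 →₀ ℕ) : xyzd (a + b) = xyzd a + xyzd b := by
  simp [xyzd, Finsupp.add_apply]; ring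
lemma wd_add (a b : Fin 4 →₀ ℕ) : wd (a + b) = wd a + wd b := by
  simp [wd, Finsupp.add_apply]; ring
lemma xyzd_mono (a b : Fin 4 →₀ ℕ) (h : a ≤ b) : xyzd a ≤ xyzd b := by
  have h0 := h 0; have h1 := h 1; have h2 := h 2
  simp [xyzd]; omega
lemma wd_mono (a b : Fin 4 →₀ ℕ) (h : a ≤ b) : wd a ≤ wd b := by
  have h0 := h 0; have h1 := h 1; have h2 := h 2; have h3 := h 3
  simp [wd]; omega

lemma finsupp_decomp (μ : Fin 4 →₀ ℕ) :
    μ = Finsupp.single 0 (μ 0) + Finsupp.single 1 (μ 1) + Finsupp.single 2 (μ 2)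
      + Finsupp.single 3 (μ 3) := by
  ext i
  fin_cases i <;> simp [Finsupp.single_apply]

lemma mem_span_mono {x : SP} {s : Set (Fin 4 →₀ ℕ)} :
    x ∈ Ideal.span (mono '' s) ↔ ∀ xi ∈ x.support, ∃ si ∈ s, si ≤ xi :=
  mem_ideal_span_monomial_image

lemma mono_eq_prod (μ : Fin 4 →₀ ℕ) :
    mono μ = (X 0 ^ μ 0 * X 1 ^ μ 1 * X 2 ^ μ 2) * X 3 ^ μ 3 := by
  rw [X_pow_eq_monomial, X_pow_eq_monomial, X_pow_eq_monomial, X_pow_eq_monomial,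
    monomial_mul, monomial_mul, monomial_mul]
  rw [mono, ← finsupp_decomp]
  norm_num

lemma span_pow_xyz (n : ℕ) :
    (Ideal.span {(X 0 : SP), X 1, X 2}) ^ n = Ideal.span (mono '' {μ | n ≤ xyzd μ}) := by
  apply le_antisymm
  · induction n with
    | zero =>
      rw [pow_zero, Ideal.one_eq_top, top_le_iff, Ideal.eq_top_iff_one]
      apply Ideal.subset_span
      exact ⟨0, by simp, by simp [mono]⟩
    | succ n ih =>
      rw [pow_succ]
      apply Ideal.mul_le.2
      intro r hr s hs
      have hr' : ∀ xi ∈ r.support, n ≤ xyzd xi := by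
        intro xi hxi
        obtain ⟨si, hsi, hle⟩ := mem_span_mono.1 (ih hr) xi hxi
        exact le_trans hsi (xyzd_mono _ _ hle)
      have hXset : ({(X 0 : SP), X 1, X 2} : Set SP)
          = mono '' {Finsupp.single 0 1, Finsupp.single 1 1, Finsupp.single 2 1} := by
        simp only [Set.image_insert_eq, Set.image_singleton, mono, ← single_eq_monomial]
        rfl
      have hs' : ∀ xi ∈ s.support, 1 ≤ xyzd xi := by
        intro xi hxi
        rw [hXset] at hs
        obtain ⟨si, hsi, hle⟩ := mem_span_mono.1 hs xi hxi
        rcases hsi with h | h | h <;> subst h <;>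
          · refine le_trans ?_ (xyzd_mono _ _ hle)
            simp [xyzd]
      rw [mem_span_mono]
      intro xi hxi
      refine ⟨xi, ?_, le_refl _⟩
      classical
      have := support_mul r s hxi
      rw [Finset.mem_add] at this
      obtain ⟨a, ha, b, hb, rfl⟩ := this
      have := hr' a ha
      have := hs' b hb
      rw [Set.mem_setOf_eq, xyzd_add]
      omega
  · rw [Ideal.span_le]
    rintro _ ⟨μ, hμ, rfl⟩
    rw [Set.mem_setOf_eq] at hμ
    rw [mono_eq_prod]
    apply Ideal.mul_mem_right
    have h0 : (X 0 : SP) ∈ Ideal.span {(X 0 : SP), X 1, X 2} := Ideal.subset_span (by simp)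
    have h1 : (X 1 : SP) ∈ Ideal.span {(X 0 : SP), X 1, X 2} := Ideal.subset_span (by simp)
    have h2 : (X 2 : SP) ∈ Ideal.span {(X 0 : SP), X 1, X 2} := Ideal.subset_span (by simp)
    have key : (X 0 : SP) ^ μ 0 * X 1 ^ μ 1 * X 2 ^ μ 2
        ∈ (Ideal.span {(X 0 : SP), X 1, X 2}) ^ (μ 0 + μ 1 + μ 2) := by
      rw [pow_add, pow_add]
      exact Ideal.mul_mem_mul (Ideal.mul_mem_mul (Ideal.pow_mem_pow h0 _)
        (Ideal.pow_mem_pow h1 _)) (Ideal.pow_mem_pow h2 _)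
    exact Ideal.pow_le_pow_right hμ key

lemma span_pow_all (n : ℕ) :
    (Ideal.span {(X 0 : SP), X 1, X 2, X 3}) ^ n = Ideal.span (mono '' {μ | n ≤ wd μ}) := by
  apply le_antisymm
  · induction n with
    | zero =>
      rw [pow_zero, Ideal.one_eq_top, top_le_iff, Ideal.eq_top_iff_one]
      apply Ideal.subset_span
      exact ⟨0, by simp, by simp [mono]⟩
    | succ n ih =>
      rw [pow_succ]
      apply Ideal.mul_le.2
      intro r hr s hs
      have hr' : ∀ xi ∈ r.support, n ≤ wd xi := by
        intro xi hxi
        obtain ⟨si, hsi, hle⟩ := mem_span_mono.1 (ih hr) xi hxi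
        exact le_trans hsi (wd_mono _ _ hle)
      have hXset : ({(X 0 : SP), X 1, X 2, X 3} : Set SP)
          = mono '' {Finsupp.single 0 1, Finsupp.single 1 1, Finsupp.single 2 1,
              Finsupp.single 3 1} := by
        simp only [Set.image_insert_eq, Set.image_singleton, mono, ← single_eq_monomial]
        rfl
      have hs' : ∀ xi ∈ s.support, 1 ≤ wd xi := by
        intro xi hxi
        rw [hXset] at hs
        obtain ⟨si, hsi, hle⟩ := mem_span_mono.1 hs xi hxi
        rcases hsi with h | h | h | h <;> subst h <;>
          · refine le_trans ?_ (wd_mono _ _ hle)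
            simp [wd]
      rw [mem_span_mono]
      intro xi hxi
      refine ⟨xi, ?_, le_refl _⟩
      classical
      have := support_mul r s hxi
      rw [Finset.mem_add] at this
      obtain ⟨a, ha, b, hb, rfl⟩ := this
      have := hr' a ha
      have := hs' b hb
      rw [Set.mem_setOf_eq, wd_add]
      omega
  · rw [Ideal.span_le]
    rintro _ ⟨μ, hμ, rfl⟩
    rw [Set.mem_setOf_eq] at hμ
    rw [mono_eq_prod]
    have h0 : (X 0 : SP) ∈ Ideal.span {(X 0 : SP), X 1, X 2, X 3} := Ideal.subset_span (by simp)
    have h1 : (X 1 : SP) ∈ Ideal.span {(X 0 : SP), X 1, X 2, X 3} := Ideal.subset_span (by simp)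
    have h2 : (X 2 : SP) ∈ Ideal.span {(X 0 : SP), X 1, X 2, X 3} := Ideal.subset_span (by simp)
    have h3 : (X 3 : SP) ∈ Ideal.span {(X 0 : SP), X 1, X 2, X 3} := Ideal.subset_span (by simp)
    have key : ((X 0 : SP) ^ μ 0 * X 1 ^ μ 1 * X 2 ^ μ 2) * X 3 ^ μ 3
        ∈ (Ideal.span {(X 0 : SP), X 1, X 2, X 3}) ^ (μ 0 + μ 1 + μ 2 + μ 3) := by
      rw [pow_add, pow_add, pow_add]
      exact Ideal.mul_mem_mul (Ideal.mul_mem_mul (Ideal.mul_mem_mul (Ideal.pow_mem_pow h0 _)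
        (Ideal.pow_mem_pow h1 _)) (Ideal.pow_mem_pow h2 _)) (Ideal.pow_mem_pow h3 _)
    exact Ideal.pow_le_pow_right hμ key



lemma mem_restrictSupport_iff {x : SP} {s : Set (Fin 4 →₀ ℕ)} :
    x ∈ restrictSupport F3 s ↔ ∀ xi ∈ x.support, xi ∈ s := by
  constructor
  · intro h xi hxi
    exact (MvPolynomial.mem_restrictSupport_iff F3).1 h hxi
  · intro h
    exact (MvPolynomial.mem_restrictSupport_iff F3).2 fun xi hxi => h xi hxi

lemma isCompl_mono (M : Set (Fin 4 →₀ ℕ)) (hup : ∀ a b, a ∈ M → a ≤ b → b ∈ M) :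
    IsCompl ((Ideal.span (mono '' M)).restrictScalars F3) (restrictSupport F3 Mᶜ) := by
  constructor
  · rw [Submodule.disjoint_def]
    intro x hx1 hx2
    rw [Submodule.restrictScalars_mem] at hx1
    rw [mem_span_mono] at hx1
    rw [_root_.mem_restrictSupport_iff] at hx2
    rw [← support_eq_empty, Finset.eq_empty_iff_forall_notMem]
    intro xi hxi
    obtain ⟨si, hsi, hle⟩ := hx1 xi hxi
    exact hx2 xi hxi (hup si xi hsi hle)
  · rw [codisjoint_iff, eq_top_iff]
    intro x _
    rw [x.as_sum]
    apply Submodule.sum_mem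
    intro v hv
    by_cases hvM : v ∈ M
    · apply Submodule.mem_sup_left
      have heq : monomial v (coeff v x) = coeff v x • mono v := by
        rw [mono, smul_monomial, smul_eq_mul, mul_one]
      have hm : mono v ∈ (Ideal.span (mono '' M)).restrictScalars F3 :=
        Ideal.subset_span (Set.mem_image_of_mem mono hvM)
      rw [heq]
      exact Submodule.smul_mem _ _ hm
    · apply Submodule.mem_sup_right
      rw [_root_.mem_restrictSupport_iff]
      intro xi hxi
      rw [support_monomial] at hxi
      split_ifs at hxi
      · exact absurd hxi (Finset.notMem_empty xi)
      · rw [Finset.mem_singleton] at hxi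
        subst hxi
        exact hvM

def quotEquivSupported (M : Set (Fin 4 →₀ ℕ)) (hup : ∀ a b, a ∈ M → a ≤ b → b ∈ M) :
    (SP ⧸ (Ideal.span (mono '' M)).restrictScalars F3) ≃ₗ[F3] restrictSupport F3 Mᶜ :=
  Submodule.quotientEquivOfIsCompl _ _ (isCompl_mono M hup)

lemma finrank_quot (M : Set (Fin 4 →₀ ℕ)) (B : Finset (Fin 4 →₀ ℕ))
    (hup : ∀ a b, a ∈ M → a ≤ b → b ∈ M) (hB : ∀ μ, μ ∈ B ↔ μ ∉ M) :
    Module.finrank F3 (SP ⧸ (Ideal.span (mono '' M)).restrictScalars F3) = B.card := by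
  have hMc : Mᶜ = (↑B : Set (Fin 4 →₀ ℕ)) := by
    ext μ; simp [hB]
  rw [(quotEquivSupported M hup).finrank_eq]
  rw [hMc]
  have b := basisRestrictSupport F3 (↑B : Set (Fin 4 →₀ ℕ))
  rw [Module.finrank_eq_card_basis b, ← Set.toFinset_card, Finset.toFinset_coe]

lemma finiteDimensional_quot (M : Set (Fin 4 →₀ ℕ)) (B : Finset (Fin 4 →₀ ℕ))
    (hup : ∀ a b, a ∈ M → a ≤ b → b ∈ M) (hB : ∀ μ, μ ∈ B ↔ μ ∉ M) :
    FiniteDimensional F3 (SP ⧸ (Ideal.span (mono '' M)).restrictScalars F3) := by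
  have hMc : Mᶜ = (↑B : Set (Fin 4 →₀ ℕ)) := by
    ext μ; simp [hB]
  have e := quotEquivSupported M hup
  rw [hMc] at e
  have b := basisRestrictSupport F3 (↑B : Set (Fin 4 →₀ ℕ))
  have : Module.Finite F3 (restrictSupport F3 (↑B : Set (Fin 4 →₀ ℕ))) :=
    Module.Finite.of_basis b
  exact Module.Finite.equiv e.symm


def fq : SP := X 0 ^ 4 + X 1 ^ 4 + X 2 ^ 4 + X 3 ^ 4

def Mset (n : ℕ) : Set (Fin 4 →₀ ℕ) := {μ | n ≤ xyzd μ ∨ n + 1 ≤ wd μ}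
def Wset (m : ℕ) : Set (Fin 4 →₀ ℕ) := {μ | m ≤ wd μ}

lemma fq_eq_sum : fq = monomial (Finsupp.single 0 4) 1 + monomial (Finsupp.single 1 4) 1
    + monomial (Finsupp.single 2 4) 1 + monomial (Finsupp.single 3 4) 1 := by
  rw [fq, X_pow_eq_monomial, X_pow_eq_monomial, X_pow_eq_monomial, X_pow_eq_monomial]

lemma support_fq : fq.support ⊆ {Finsupp.single 0 4, Finsupp.single 1 4,
    Finsupp.single 2 4, Finsupp.single 3 4} := by
  classical
  rw [fq_eq_sum]
  refine subset_trans (support_add) ?_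
  apply Finset.union_subset
  · refine subset_trans (support_add) ?_
    apply Finset.union_subset
    · refine subset_trans (support_add) ?_
      apply Finset.union_subset <;>
        refine subset_trans (support_monomial_subset) (by intro x hx; simp at hx; simp [hx])
    · refine subset_trans (support_monomial_subset) (by intro x hx; simp at hx; simp [hx])
  · refine subset_trans (support_monomial_subset) (by intro x hx; simp at hx; simp [hx])

lemma coeff_fq_mul (g : SP) (lam : Fin 4 →₀ ℕ) :
    coeff lam (fq * g) = (if Finsupp.single (0:Fin 4) 4 ≤ lam then coeff (lam - Finsupp.single 0 4) g else 0)
      + (if Finsupp.single (1:Fin 4) 4 ≤ lam then coeff (lam - Finsupp.single 1 4) g else 0)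
      + (if Finsupp.single (2:Fin 4) 4 ≤ lam then coeff (lam - Finsupp.single 2 4) g else 0)
      + (if Finsupp.single (3:Fin 4) 4 ≤ lam then coeff (lam - Finsupp.single 3 4) g else 0) := by
  rw [fq_eq_sum, add_mul, add_mul, add_mul, coeff_add, coeff_add, coeff_add]
  rw [coeff_monomial_mul', coeff_monomial_mul', coeff_monomial_mul', coeff_monomial_mul']
  simp only [one_mul]

lemma ker_lemma (n : ℕ) (g : SP) :
    fq * g ∈ Ideal.span (mono '' Mset n) ↔ g ∈ Ideal.span (mono '' Wset (n - 3)) := by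
  constructor
  · intro h
    rw [mem_span_mono]
    intro mu hmu
    by_contra hcon
    push_neg at hcon
    have hbad : mu ∈ g.support.filter (fun μ => wd μ + 4 ≤ n) := by
      rw [Finset.mem_filter]
      refine ⟨hmu, ?_⟩
      have := hcon mu
      simp only [Wset, Set.mem_setOf_eq] at this
      have h2 : ¬ (n - 3 ≤ wd mu) := fun hle => this hle (le_refl mu)
      omega
    -- pick element with maximal value at 3
    obtain ⟨μ, hμmem, hμmax⟩ := Finset.exists_max_image
      (g.support.filter (fun μ => wd μ + 4 ≤ n)) (fun μ => μ 3) ⟨mu, hbad⟩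
    rw [Finset.mem_filter] at hμmem
    obtain ⟨hμsupp, hμdeg⟩ := hμmem
    set lam := μ + Finsupp.single 3 4 with hlam
    have hlam3 : Finsupp.single (3:Fin 4) 4 ≤ lam := by
      rw [Finsupp.single_le_iff]
      simp [hlam, Finsupp.add_apply, Finsupp.single_apply]
    have hsub3 : lam - Finsupp.single 3 4 = μ := by
      rw [hlam]; exact add_tsub_cancel_right μ _
    have hc : ∀ i : Fin 4, i ≠ 3 → Finsupp.single i 4 ≤ lam →
        coeff (lam - Finsupp.single i 4) g = 0 := by
      intro i hi hle
      set ν := lam - Finsupp.single i 4 with hν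
      by_contra hne
      have hνsupp : ν ∈ g.support := mem_support_iff.2 hne
      have hval : ∀ j : Fin 4, ν j = (μ j + (if j = 3 then 4 else 0)) - (if j = i then 4 else 0) := by
        intro j
        rw [hν, Finsupp.tsub_apply, hlam, Finsupp.add_apply, Finsupp.single_apply,
          Finsupp.single_apply]
        congr 1 <;> simp [eq_comm]
      have hlei : 4 ≤ μ i := by
        have := Finsupp.single_le_iff.1 hle
        rw [hlam, Finsupp.add_apply, Finsupp.single_apply] at this
        simpa [hi, eq_comm] using this
      have hνw : wd ν = wd μ := by
        have h0 := hval 0; have h1 := hval 1; have h2 := hval 2; have h3 := hval 3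
        rw [wd, wd]
        fin_cases i <;> simp_all <;> omega
      have hν3 : ν 3 = μ 3 + 4 := by
        have := hval 3
        simp [hi.symm] at this ⊢
        omega
      have : ν ∈ g.support.filter (fun μ => wd μ + 4 ≤ n) :=
        Finset.mem_filter.2 ⟨hνsupp, by omega⟩
      have := hμmax ν this
      omega
    have hcoeff : coeff lam (fq * g) = coeff μ g := by
      rw [coeff_fq_mul]
      have e0 : (if Finsupp.single (0:Fin 4) 4 ≤ lam then coeff (lam - Finsupp.single 0 4) g else 0) = 0 := by
        split_ifs with h'
        · exact hc 0 (by decide) h'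
        · rfl
      have e1 : (if Finsupp.single (1:Fin 4) 4 ≤ lam then coeff (lam - Finsupp.single 1 4) g else 0) = 0 := by
        split_ifs with h'
        · exact hc 1 (by decide) h'
        · rfl
      have e2 : (if Finsupp.single (2:Fin 4) 4 ≤ lam then coeff (lam - Finsupp.single 2 4) g else 0) = 0 := by
        split_ifs with h'
        · exact hc 2 (by decide) h'
        · rfl
      rw [e0, e1, e2, if_pos hlam3, hsub3]
      ring
    have hlamsupp : lam ∈ (fq * g).support := by
      rw [mem_support_iff, hcoeff]
      exact mem_support_iff.1 hμsupp
    obtain ⟨si, hsi, hsile⟩ := mem_span_mono.1 h lam hlamsupp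
    have hlamM : lam ∈ Mset n := by
      rcases hsi with h' | h'
      · exact Or.inl (le_trans h' (xyzd_mono _ _ hsile))
      · exact Or.inr (le_trans h' (wd_mono _ _ hsile))
    have hxyz : xyzd lam = xyzd μ := by
      simp [xyzd, hlam, Finsupp.add_apply, Finsupp.single_apply]
    have hwd : wd lam = wd μ + 4 := by
      simp [wd, hlam, Finsupp.add_apply, Finsupp.single_apply]
      omega
    have hxyzle : xyzd μ ≤ wd μ := by rw [xyzd, wd]; omega
    have hlamM' : n ≤ xyzd lam ∨ n + 1 ≤ wd lam := hlamM
    rcases hlamM' with h' | h' <;> omega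
  · intro h
    rw [mem_span_mono] at h ⊢
    intro xi hxi
    classical
    have hsub := support_mul fq g hxi
    rw [Finset.mem_add] at hsub
    obtain ⟨a, ha, b, hb, rfl⟩ := hsub
    refine ⟨a + b, Or.inr ?_, le_refl _⟩
    have hwa : wd a = 4 := by
      have := support_fq ha
      simp only [Finset.mem_insert, Finset.mem_singleton] at this
      rcases this with h' | h' | h' | h' <;> subst h' <;> simp [wd, Finsupp.single_apply]
    obtain ⟨si, hsi, hsile⟩ := h b hb
    have hwb : n - 3 ≤ wd b := le_trans hsi (wd_mono _ _ hsile)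
    rw [wd_add]
    omega














-- bridging finset lemmas
def B1 (n : ℕ) : Finset (Fin 4 →₀ ℕ) := (B1fun n).image Finsupp.equivFunOnFinite.symm
def B2 (n : ℕ) : Finset (Fin 4 →₀ ℕ) := (B2fun n).image Finsupp.equivFunOnFinite.symm

lemma mem_image_equiv {s : Finset (Fin 4 → ℕ)} {μ : Fin 4 →₀ ℕ} :
    μ ∈ s.image Finsupp.equivFunOnFinite.symm ↔ Finsupp.equivFunOnFinite μ ∈ s := by
  rw [Finset.mem_image]
  constructor
  · rintro ⟨f, hf, rfl⟩
    simpa using hf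
  · intro h
    exact ⟨Finsupp.equivFunOnFinite μ, h, by simp⟩

lemma hB1 (n : ℕ) (hn : 1 ≤ n) : ∀ μ, μ ∈ B1 n ↔ μ ∉ Mset n := by
  intro μ
  rw [B1, mem_image_equiv, mem_B1fun]
  have : ∀ i, Finsupp.equivFunOnFinite μ i = μ i := fun _ => rfl
  rw [this 0, this 1, this 2, this 3]
  have : μ ∉ Mset n ↔ ¬ (n ≤ xyzd μ) ∧ ¬ (n + 1 ≤ wd μ) := by
    rw [Mset, Set.mem_setOf_eq]; tauto
  rw [this, xyzd, wd]
  omega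

lemma hB2 (n : ℕ) : ∀ μ, μ ∈ B2 n ↔ μ ∉ Wset (n - 3) := by
  intro μ
  rw [B2, mem_image_equiv, mem_B2fun]
  have : ∀ i, Finsupp.equivFunOnFinite μ i = μ i := fun _ => rfl
  rw [this 0, this 1, this 2, this 3]
  have : μ ∉ Wset (n-3) ↔ ¬ (n - 3 ≤ wd μ) := Iff.rfl
  rw [this, wd]
  omega

lemma hup1 (n : ℕ) : ∀ a b, a ∈ Mset n → a ≤ b → b ∈ Mset n := by
  intro a b ha hle
  rcases ha with h | h
  · exact Or.inl (le_trans h (xyzd_mono a b hle))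
  · exact Or.inr (le_trans h (wd_mono a b hle))

lemma hup2 (m : ℕ) : ∀ a b, a ∈ Wset m → a ≤ b → b ∈ Wset m := by
  intro a b ha hle
  exact le_trans ha (wd_mono a b hle)

open MvPolynomial in
theorem stmt_17 (n : ℕ) (hn : 1 ≤ n) :
    Module.finrank (ZMod 3) (MvPolynomial (Fin 4) (ZMod 3) ⧸
        ((Ideal.span {(X 0 : MvPolynomial (Fin 4) (ZMod 3)), X 1, X 2}) ^ n ⊔
          (Ideal.span {(X 0 : MvPolynomial (Fin 4) (ZMod 3)), X 1, X 2, X 3}) ^ (n + 1) ⊔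
          Ideal.span {(X 0 : MvPolynomial (Fin 4) (ZMod 3)) ^ 4 + X 1 ^ 4 + X 2 ^ 4 + X 3 ^ 4}))
      = 4 * Nat.choose (n + 2) 3 - 3 * Nat.choose (n + 1) 2 + n := by
  classical
  set Kb : Ideal SP := (Ideal.span {(X 0 : SP), X 1, X 2}) ^ n ⊔
      (Ideal.span {(X 0 : SP), X 1, X 2, X 3}) ^ (n + 1) ⊔ Ideal.span {fq} with hKb
  have h1 : (Ideal.span {(X 0 : SP), X 1, X 2}) ^ n ⊔
      (Ideal.span {(X 0 : SP), X 1, X 2, X 3}) ^ (n + 1) = Ideal.span (mono '' Mset n) := by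
    rw [span_pow_xyz, span_pow_all, ← Ideal.span_union, ← Set.image_union]
    have hset : ({μ | n ≤ xyzd μ} ∪ {μ | n+1 ≤ wd μ} : Set (Fin 4 →₀ ℕ)) = Mset n := by
      ext μ; simp [Mset]
    rw [hset]
  set S' : Submodule F3 SP := (Ideal.span (mono '' Mset n)).restrictScalars F3 with hS'
  set T' : Submodule F3 SP := (Ideal.span {fq}).restrictScalars F3 with hT'
  have hsup : Kb.restrictScalars F3 = S' ⊔ T' := by
    rw [hKb, h1]
    ext x
    rw [Submodule.restrictScalars_mem, Submodule.mem_sup, Submodule.mem_sup]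
    constructor
    · rintro ⟨a, ha, b, hb, rfl⟩
      exact ⟨a, ha, b, hb, rfl⟩
    · rintro ⟨a, ha, b, hb, rfl⟩
      exact ⟨a, ha, b, hb, rfl⟩
  set φ : SP →ₗ[F3] (SP ⧸ S') := S'.mkQ.comp (LinearMap.mulLeft F3 fq) with hφ
  have hrange : LinearMap.range φ = T'.map S'.mkQ := by
    rw [hφ, LinearMap.range_comp]
    congr 1
    ext x
    rw [LinearMap.mem_range, Submodule.restrictScalars_mem, Ideal.mem_span_singleton']
    constructor
    · rintro ⟨y, rfl⟩
      exact ⟨y, by rw [LinearMap.mulLeft_apply, mul_comm]⟩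
    · rintro ⟨a, rfl⟩
      exact ⟨a, by rw [LinearMap.mulLeft_apply, mul_comm]⟩
  have hker : LinearMap.ker φ = (Ideal.span (mono '' Wset (n-3))).restrictScalars F3 := by
    ext g
    rw [LinearMap.mem_ker, hφ, LinearMap.comp_apply, LinearMap.mulLeft_apply,
      Submodule.mkQ_apply, Submodule.Quotient.mk_eq_zero, hS', Submodule.restrictScalars_mem,
      Submodule.restrictScalars_mem]
    exact ker_lemma n g
  have hFD : FiniteDimensional F3 (SP ⧸ S') :=
    finiteDimensional_quot (Mset n) (B1 n) (hup1 n) (hB1 n hn)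
  have hd1 : Module.finrank F3 (SP ⧸ S') = (B1fun n).card := by
    rw [hS', finrank_quot (Mset n) (B1 n) (hup1 n) (hB1 n hn), B1,
      Finset.card_image_of_injective _ (Equiv.injective _)]
  have hd2 : Module.finrank F3 (LinearMap.range φ) = n.choose 4 := by
    rw [← (LinearMap.quotKerEquivRange φ).finrank_eq, hker,
      finrank_quot (Wset (n-3)) (B2 n) (hup2 (n-3)) (hB2 n), B2,
      Finset.card_image_of_injective _ (Equiv.injective _), cardB2]
  have hq := Submodule.finrank_quotient_add_finrank (LinearMap.range φ)
  have hmain : Module.finrank F3 (SP ⧸ Kb)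
      = Module.finrank F3 ((SP ⧸ S') ⧸ (LinearMap.range φ)) := by
    rw [← (Submodule.Quotient.restrictScalarsEquiv F3 Kb).finrank_eq, hsup, hrange,
      (Submodule.quotientQuotientEquivQuotientSup S' T').finrank_eq]
  have hA : Module.finrank F3 (SP ⧸ Kb) + n.choose 4 + (n+3).choose 3
      = (n+4).choose 4 + (n+2).choose 3 := by
    have := cardB1 n hn
    omega
  exact arith_final n _ hn hA
end
end

section
/- In the ring $R = \mathbb{F}_2[X,Y,Z,W]/(X^4+Y^4+Z^4+W^4)$, for every $n \geq 1$ and every $c \in R$ that is not in the minimal prime $(x+y+z+w)$, and every element $u \in (x,y,z)^n + (x+y+z+w)$, there exist infinitely many $e$ such that $c\,u^{2^e} \in ((x,y,z)^n)^{[2^e]}$; in particular $w \in (x,y,z)^*$. -/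
set_option synthInstance.maxHeartbeats 1000000
set_option maxHeartbeats 2000000

/-- Freshman's dream, squaring, in a commutative ring where `2 = 0`. -/
lemma aux_sq {R : Type*} [CommRing R] (h2 : (2 : R) = 0) (a b : R) :
    (a + b) ^ 2 = a ^ 2 + b ^ 2 := by
  linear_combination a * b * h2

/-- Freshman's dream for `2 ^ e`-th powers in a commutative ring where `2 = 0`. -/
lemma aux_frob {R : Type*} [CommRing R] (h2 : (2 : R) = 0) (a b : R) (e : ℕ) :
    (a + b) ^ 2 ^ e = a ^ 2 ^ e + b ^ 2 ^ e := by
  induction e with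
  | zero => simp
  | succ e ih =>
    rw [pow_succ, pow_mul, pow_mul, pow_mul, ih, aux_sq h2]

/-- Freshman's dream, 4th powers. -/
lemma aux_four {R : Type*} [CommRing R] (h2 : (2 : R) = 0) (a b : R) :
    (a + b) ^ 4 = a ^ 4 + b ^ 4 := by
  linear_combination (2 * a ^ 3 * b + 3 * a ^ 2 * b ^ 2 + 2 * a * b ^ 3) * h2

open MvPolynomial in
theorem stmt_19
    (f : MvPolynomial (Fin 4) (ZMod 2))
    (hf : f = X 0 ^ 4 + X 1 ^ 4 + X 2 ^ 4 + X 3 ^ 4)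
    (x y z w : MvPolynomial (Fin 4) (ZMod 2) ⧸ Ideal.span {f})
    (hx : x = Ideal.Quotient.mk (Ideal.span {f}) (X 0))
    (hy : y = Ideal.Quotient.mk (Ideal.span {f}) (X 1))
    (hz : z = Ideal.Quotient.mk (Ideal.span {f}) (X 2))
    (hw : w = Ideal.Quotient.mk (Ideal.span {f}) (X 3)) :
    (∀ n : ℕ, 1 ≤ n →
      ∀ c : MvPolynomial (Fin 4) (ZMod 2) ⧸ Ideal.span {f},
        c ∉ Ideal.span {x + y + z + w} →
        ∀ u ∈ (Ideal.span {x, y, z}) ^ n ⊔ Ideal.span {x + y + z + w},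
          {e : ℕ | c * u ^ (2 ^ e) ∈
            (Ideal.span {x ^ (2 ^ e), y ^ (2 ^ e), z ^ (2 ^ e)}) ^ n}.Infinite) ∧
    (∀ e : ℕ, 2 ≤ e → w ^ (2 ^ e) ∈ Ideal.span {x ^ (2 ^ e), y ^ (2 ^ e), z ^ (2 ^ e)}) := by
  haveI : Nontrivial (MvPolynomial (Fin 4) (ZMod 2) ⧸ Ideal.span {f}) := by
    refine Ideal.Quotient.nontrivial_iff.mpr ?_
    rw [Ne, Ideal.span_singleton_eq_top]
    intro hunit
    have h2 := hunit.map constantCoeff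
    rw [hf] at h2
    simp at h2
  haveI : CharP (MvPolynomial (Fin 4) (ZMod 2) ⧸ Ideal.span {f}) 2 :=
    charP_of_injective_algebraMap
      (algebraMap (ZMod 2) (MvPolynomial (Fin 4) (ZMod 2) ⧸ Ideal.span {f})).injective 2
  haveI : ExpChar (MvPolynomial (Fin 4) (ZMod 2) ⧸ Ideal.span {f}) 2 :=
    ExpChar.prime Nat.prime_two
  have h2Q : (2 : MvPolynomial (Fin 4) (ZMod 2) ⧸ Ideal.span {f}) = 0 := by
    exact_mod_cast CharP.cast_eq_zero (MvPolynomial (Fin 4) (ZMod 2) ⧸ Ideal.span {f}) 2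
  have h2P : (2 : MvPolynomial (Fin 4) (ZMod 2)) = 0 := by
    exact_mod_cast CharP.cast_eq_zero (MvPolynomial (Fin 4) (ZMod 2)) 2
  -- f is the 4th power of X0+X1+X2+X3
  have hfpow : (X 0 + X 1 + X 2 + X 3 : MvPolynomial (Fin 4) (ZMod 2)) ^ 4 = f := by
    rw [hf, aux_four h2P, aux_four h2P, aux_four h2P]
  -- the image of f in the quotient is zero
  have hmkf : x ^ 4 + y ^ 4 + z ^ 4 + w ^ 4 = 0 := by
    rw [hx, hy, hz, hw, ← map_pow, ← map_pow, ← map_pow, ← map_pow, ← map_add, ← map_add,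
      ← map_add, ← hf, Ideal.Quotient.eq_zero_iff_mem]
    exact Ideal.subset_span rfl
  have hs4 : (x + y + z + w) ^ 4 = 0 := by
    rw [hx, hy, hz, hw, ← map_add, ← map_add, ← map_add, ← map_pow, hfpow,
      Ideal.Quotient.eq_zero_iff_mem]
    exact Ideal.subset_span rfl
  -- s^(2^e) = 0 for e ≥ 2
  have hsq : ∀ e : ℕ, 2 ≤ e → (x + y + z + w) ^ 2 ^ e = 0 := by
    intro e he
    obtain ⟨k, rfl⟩ := Nat.exists_eq_add_of_le he
    have h4 : (2 : ℕ) ^ (2 + k) = 4 * 2 ^ k := by rw [pow_add]; norm_num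
    rw [h4, pow_mul, hs4, zero_pow (by positivity)]
  -- w^4 = x^4 + y^4 + z^4
  have hw4 : w ^ 4 = x ^ 4 + y ^ 4 + z ^ 4 := by
    linear_combination hmkf - (x ^ 4 + y ^ 4 + z ^ 4) * h2Q
  constructor
  · intro n hn c hc u hu
    refine (Set.Ici_infinite 2).mono ?_
    intro e he
    have he' : 2 ≤ e := he
    simp only [Set.mem_setOf_eq]
    obtain ⟨v, hv, j, hj, rfl⟩ := Submodule.mem_sup.mp hu
    obtain ⟨r, rfl⟩ := Ideal.mem_span_singleton'.mp hj
    have hu2 : (v + r * (x + y + z + w)) ^ 2 ^ e = v ^ 2 ^ e := by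
      rw [aux_frob h2Q, mul_pow, hsq e he', mul_zero, add_zero]
    rw [hu2]
    apply Ideal.mul_mem_left
    -- use the iterated Frobenius ring homomorphism
    set F := iterateFrobenius (MvPolynomial (Fin 4) (ZMod 2) ⧸ Ideal.span {f}) 2 e with hF
    have hmem := Ideal.mem_map_of_mem F hv
    rw [Ideal.map_pow, Ideal.map_span] at hmem
    have himg : F '' {x, y, z} = {x ^ 2 ^ e, y ^ 2 ^ e, z ^ 2 ^ e} := by
      simp [hF, Set.image_insert_eq, Set.image_singleton, iterateFrobenius_def]
    rw [himg] at hmem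
    have hFv : F v = v ^ 2 ^ e := iterateFrobenius_def 2 e v
    rwa [hFv] at hmem
  · intro e he
    obtain ⟨k, rfl⟩ := Nat.exists_eq_add_of_le he
    have h4 : (2 : ℕ) ^ (2 + k) = 4 * 2 ^ k := by rw [pow_add]; norm_num
    have hw2 : w ^ 2 ^ (2 + k) = x ^ 2 ^ (2 + k) + y ^ 2 ^ (2 + k) + z ^ 2 ^ (2 + k) := by
      rw [h4, pow_mul, hw4, aux_frob h2Q, aux_frob h2Q,
        ← pow_mul, ← pow_mul, ← pow_mul, ← h4]
    rw [hw2]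
    refine Ideal.add_mem _ (Ideal.add_mem _ ?_ ?_) ?_ <;>
      exact Ideal.subset_span (by simp)
end
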